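/- arXiv:2101.00636 — 8 statements merged into one kernel-verified Lean document; each statement's English description precedes it below -/
import Mathlib

section
/- For every computably enumerable set A ⊆ ℕ there exists a computably enumerable binary tree T such that for every n ∈ ℕ the set T_ext^{=n} of extendible nodes of T of length n has exactly one element, and the characteristic function of A (the function f : ℕ → Bool with f(n) = true iff n ∈ A) is a path of T; consequently this characteristic function is the unique path of T. -/
/-- A binary tree: a set of binary strings closed under taking prefixes. -/
def IsBinTree (T : Set (List Bool)) : Prop :=
  ∀ σ τ : List Bool, σ <+: τ → τ ∈ T → σ ∈ T

/-- `f : ℕ → Bool` is a path of `T`: every initial segment `[f 0, …, f (n-1)]` is in `T`. -/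
def IsPath (T : Set (List Bool)) (f : ℕ → Bool) : Prop :=
  ∀ n : ℕ, (List.ofFn fun i : Fin n => f i) ∈ T

/-- `σ` is an extendible node of `T`: `σ ∈ T` and `σ` has extensions in `T` of every
greater length. -/
def Extendible (T : Set (List Bool)) (σ : List Bool) : Prop :=
  σ ∈ T ∧ ∀ n : ℕ, ∃ τ ∈ T, σ <+: τ ∧ τ.length = σ.length + n

/-- `T_ext^{=n}`: the set of extendible nodes of `T` of length `n`. -/
def extLevel (T : Set (List Bool)) (n : ℕ) : Set (List Bool) :=
  {σ : List Bool | Extendible T σ ∧ σ.length = n}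

open Nat.Partrec (Code)
open Nat.Partrec.Code

namespace Stmt0Aux

/-- stage-`s` approximation of the domain of `c`. -/
def As (c : Code) (s i : ℕ) : Bool := (evaln s c i).isSome

theorem As_mono {c : Code} {s s' i : ℕ} (h : s ≤ s') (hs : As c s i = true) :
    As c s' i = true := by
  rcases Option.isSome_iff_exists.1 hs with ⟨x, hx⟩
  exact Option.isSome_iff_exists.2 ⟨x, evaln_mono h hx⟩

theorem dom_iff_As {c : Code} {i : ℕ} : (eval c i).Dom ↔ ∃ s, As c s i = true := by
  rw [Part.dom_iff_mem]
  constructor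
  · rintro ⟨x, hx⟩
    rcases evaln_complete.1 hx with ⟨k, hk⟩
    exact ⟨k, Option.isSome_iff_exists.2 ⟨x, hk⟩⟩
  · rintro ⟨s, hs⟩
    rcases Option.isSome_iff_exists.1 hs with ⟨x, hx⟩
    exact ⟨x, evaln_complete.2 ⟨s, hx⟩⟩

def ok (c : Code) (σ : List Bool) (s i : ℕ) : Bool :=
  bif σ.getD i false then As c s i else !As c σ.length i

def Q (c : Code) (σ : List Bool) (s : ℕ) : Bool :=
  ((List.range σ.length).map (ok c σ s)).foldr (· && ·) true

theorem Q_eq_true {c : Code} {σ : List Bool} {s : ℕ} :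
    Q c σ s = true ↔ ∀ i < σ.length, ok c σ s i = true := by
  have : Q c σ s = (List.range σ.length).all (ok c σ s) := by
    rw [Q]
    induction (List.range σ.length) with
    | nil => rfl
    | cons a l ih => simp [List.all_cons, ← ih]
  rw [this, List.all_eq_true]
  simp [List.mem_range]

/-- The tree. -/
def Tr (c : Code) : Set (List Bool) := {σ | ∃ s, Q c σ s = true}

theorem mem_Tr {c : Code} {σ : List Bool} :
    σ ∈ Tr c ↔ ∀ i < σ.length,
      (σ.getD i false = true → (eval c i).Dom) ∧
      (σ.getD i false = false → As c σ.length i = false) := by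
  constructor
  · rintro ⟨s, hs⟩ i hi
    have h := (Q_eq_true.1 hs) i hi
    rw [ok] at h
    constructor
    · intro hb; rw [hb] at h; simp at h
      exact dom_iff_As.2 ⟨s, h⟩
    · intro hb; rw [hb] at h; simpa using h
  · intro H
    -- find a common stage for the true bits
    have key : ∀ n, n ≤ σ.length → ∃ s, ∀ i < n, σ.getD i false = true → As c s i = true := by
      intro n
      induction n with
      | zero => exact fun _ => ⟨0, fun i hi => absurd hi (Nat.not_lt_zero i)⟩
      | succ n ih =>
        intro hn
        obtain ⟨s, hs⟩ := ih (Nat.le_of_succ_le hn)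
        by_cases hb : σ.getD n false = true
        · obtain ⟨s', hs'⟩ := dom_iff_As.1 ((H n (Nat.lt_of_succ_le hn)).1 hb)
          refine ⟨max s s', fun i hi hbi => ?_⟩
          rcases Nat.lt_succ_iff_lt_or_eq.1 hi with hi | rfl
          · exact As_mono (le_max_left _ _) (hs i hi hbi)
          · exact As_mono (le_max_right _ _) hs'
        · refine ⟨s, fun i hi hbi => ?_⟩
          rcases Nat.lt_succ_iff_lt_or_eq.1 hi with hi | rfl
          · exact hs i hi hbi
          · exact absurd hbi hb
    obtain ⟨s, hs⟩ := key σ.length le_rfl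
    refine ⟨s, Q_eq_true.2 fun i hi => ?_⟩
    rw [ok]
    cases hb : σ.getD i false with
    | true => simpa using hs i hi hb
    | false => simpa using (H i hi).2 hb

theorem getD_of_prefix {σ τ : List Bool} (h : σ <+: τ) {i : ℕ} (hi : i < σ.length) :
    σ.getD i false = τ.getD i false := by
  rw [List.getD_eq_getElem _ _ hi, List.getD_eq_getElem _ _ (lt_of_lt_of_le hi h.length_le)]
  exact (h.getElem hi)

theorem Tr_isBinTree (c : Code) : IsBinTree (Tr c) := by
  intro σ τ hpre hτ
  rw [mem_Tr] at hτ ⊢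
  intro i hi
  have hi' : i < τ.length := lt_of_lt_of_le hi hpre.length_le
  have hg := getD_of_prefix hpre hi
  constructor
  · intro hb; exact (hτ i hi').1 (hg ▸ hb)
  · intro hb
    have := (hτ i hi').2 (hg ▸ hb)
    by_contra hh
    rw [Bool.not_eq_false] at hh
    exact absurd (As_mono hpre.length_le hh) (by rw [this]; simp)

theorem Q_primrec (c : Code) : Primrec₂ (Q c) := by
  have hAs : Primrec₂ (As c) :=
    (Primrec.option_isSome.comp
      (primrec_evaln.comp (((Primrec.fst).pair (Primrec.const c)).pair Primrec.snd))).to₂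
  have hok : Primrec₂ (fun (p : List Bool × ℕ) (i : ℕ) =>
      ok c p.1 p.2 i) := by
    have h1 : Primrec (fun (q : (List Bool × ℕ) × ℕ) => As c q.1.2 q.2) :=
      hAs.comp (Primrec.snd.comp Primrec.fst) Primrec.snd
    have h2 : Primrec (fun (q : (List Bool × ℕ) × ℕ) => !As c q.1.1.length q.2) :=
      (Primrec.dom_bool Bool.not).comp
        (hAs.comp (Primrec.list_length.comp (Primrec.fst.comp Primrec.fst)) Primrec.snd)
    have h0 : Primrec (fun (q : (List Bool × ℕ) × ℕ) => q.1.1.getD q.2 false) :=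
      (Primrec.list_getD false).comp (Primrec.fst.comp Primrec.fst) Primrec.snd
    exact (Primrec.cond h0 h1 h2).to₂
  have hlist : Primrec (fun p : List Bool × ℕ =>
      (List.range p.1.length).map (ok c p.1 p.2)) :=
    Primrec.list_map (Primrec.list_range.comp (Primrec.list_length.comp Primrec.fst)) hok
  exact (Primrec.list_foldr hlist (Primrec.const true)
    ((Primrec.dom_bool₂ (· && ·)).comp (Primrec.fst.comp Primrec.snd)
      (Primrec.snd.comp Primrec.snd)).to₂).to₂

theorem Tr_re (c : Code) : REPred (· ∈ Tr c) := by
  have h1 : Partrec fun σ : List Bool => Nat.rfind fun s => Part.some (Q c σ s) :=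
    Partrec.rfind ((Q_primrec c).to_comp.partrec₂)
  have h2 := h1.dom_re
  refine h2.of_eq fun σ => ?_
  refine (Nat.rfind_dom (p := (fun s => Part.some (Q c σ s) : ℕ →. Bool))).trans ?_
  constructor
  · rintro ⟨n, hn, _⟩; exact ⟨n, by simpa using hn⟩
  · rintro ⟨n, hn⟩; exact ⟨n, by simpa using hn, fun _ => trivial⟩

noncomputable def chi (c : Code) (n : ℕ) : Bool :=
  @decide ((eval c n).Dom) (Classical.propDecidable _)

theorem chi_true {c : Code} {n : ℕ} : chi c n = true ↔ (eval c n).Dom :=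
  @decide_eq_true_iff _ (Classical.propDecidable _)

theorem getD_ofFn {f : ℕ → Bool} {n i : ℕ} (hi : i < n) :
    (List.ofFn fun j : Fin n => f j).getD i false = f i := by
  rw [List.getD_eq_getElem _ _ (by simpa using hi), List.getElem_ofFn]

theorem ofFn_prefix (f : ℕ → Bool) {m n : ℕ} (h : m ≤ n) :
    (List.ofFn fun j : Fin m => f j) <+: (List.ofFn fun j : Fin n => f j) := by
  have : (List.ofFn fun j : Fin m => f j) =
      (List.ofFn fun j : Fin n => f j).take m := by
    apply List.ext_getElem
    · simp [Nat.min_eq_left h]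
    · intro i h1 h2
      simp
  rw [this]
  exact List.take_prefix _ _

noncomputable def pref (c : Code) (n : ℕ) : List Bool := List.ofFn fun i : Fin n => chi c i

theorem length_pref (c : Code) (n : ℕ) : (pref c n).length = n := by simp [pref]

theorem getD_pref {c : Code} {n i : ℕ} (hi : i < n) :
    (pref c n).getD i false = chi c i := getD_ofFn hi

theorem pref_mem (c : Code) (n : ℕ) : pref c n ∈ Tr c := by
  rw [mem_Tr]
  intro i hi
  rw [length_pref] at hi
  rw [getD_pref hi]
  constructor
  · intro hb; exact chi_true.1 hb
  · intro hb
    by_contra hh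
    rw [Bool.not_eq_false] at hh
    have : (eval c i).Dom := dom_iff_As.2 ⟨_, hh⟩
    rw [← chi_true, hb] at this
    exact Bool.false_ne_true this

theorem pref_extLevel (c : Code) (n : ℕ) : pref c n ∈ extLevel (Tr c) n := by
  refine ⟨⟨pref_mem c n, fun m => ⟨pref c (n + m), pref_mem c (n + m),
    ofFn_prefix _ (Nat.le_add_right n m), ?_⟩⟩, length_pref c n⟩
  rw [length_pref, length_pref]

theorem extLevel_unique {c : Code} {n : ℕ} {σ : List Bool}
    (h : σ ∈ extLevel (Tr c) n) : σ = pref c n := by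
  obtain ⟨⟨hσT, hext⟩, hlen⟩ := h
  have key : ∀ i < n, σ.getD i false = chi c i := by
    intro i hi
    cases hb : σ.getD i false with
    | true =>
      have := (mem_Tr.1 hσT i (hlen ▸ hi)).1 hb
      rw [← chi_true] at this
      exact this.symm
    | false =>
      have hnd : ¬(eval c i).Dom := by
        intro hd
        obtain ⟨k, hk⟩ := dom_iff_As.1 hd
        obtain ⟨τ, hτT, hpre, hlenτ⟩ := hext k
        have hiτ : i < τ.length := by
          rw [hlenτ, hlen]; omega
        have hgd : τ.getD i false = false := by
          rw [← getD_of_prefix hpre (hlen ▸ hi), hb]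
        have := (mem_Tr.1 hτT i hiτ).2 hgd
        have htrue : As c τ.length i = true := As_mono (by omega) hk
        rw [this] at htrue
        exact Bool.false_ne_true htrue
      have : chi c i = false := by
        cases hc : chi c i with
        | false => rfl
        | true => exact absurd (chi_true.1 hc) hnd
      rw [this]
  apply List.ext_getElem
  · rw [hlen, length_pref]
  · intro i h1 h2
    have hi : i < n := hlen ▸ h1
    rw [← List.getD_eq_getElem _ false h1, ← List.getD_eq_getElem _ false h2,
      key i hi, getD_pref hi]

end Stmt0Aux

/-- For every c.e. set `A ⊆ ℕ` there is a c.e. binary tree `T` such that for every `n`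
the set of extendible nodes of length `n` has exactly one element, and the characteristic
function of `A` is a path of `T`; consequently it is the unique path of `T`. -/
theorem stmt0 (A : Set ℕ) (hA : REPred (· ∈ A)) :
    ∃ T : Set (List Bool), IsBinTree T ∧ REPred (· ∈ T) ∧
      (∀ n : ℕ, ∃! σ : List Bool, σ ∈ extLevel T n) ∧
      ∀ f : ℕ → Bool, (∀ n : ℕ, f n = true ↔ n ∈ A) →
        IsPath T f ∧ ∀ g : ℕ → Bool, IsPath T g → g = f := by
  classical
  open Stmt0Aux in
  have h2 : Partrec fun n : ℕ =>
      (Part.assert (n ∈ A) fun _ => Part.some ()).map fun _ => (0 : ℕ) :=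
    hA.map ((Computable.const 0).comp Computable.fst).to₂
  obtain ⟨c, hc⟩ := Nat.Partrec.Code.exists_code.1 (Partrec.nat_iff.1 h2)
  have hdom : ∀ n, (Nat.Partrec.Code.eval c n).Dom ↔ n ∈ A := by
    intro n
    rw [hc]
    simp [Part.dom_iff_mem]
  have hchiA : ∀ n, chi c n = true ↔ n ∈ A := fun n => chi_true.trans (hdom n)
  refine ⟨Tr c, Tr_isBinTree c, Tr_re c, fun n =>
    ⟨pref c n, pref_extLevel c n, fun σ h => extLevel_unique h⟩, fun f hf => ?_⟩
  have hfchi : f = chi c := by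
    funext n
    have : f n = true ↔ chi c n = true := (hf n).trans (hchiA n).symm
    cases h1 : f n <;> cases h2 : chi c n <;> simp [h1, h2] at this ⊢
  constructor
  · intro n
    rw [hfchi]
    exact pref_mem c n
  · intro g hg
    funext n
    have hgl : (List.ofFn fun i : Fin (n+1) => g i) ∈ extLevel (Tr c) (n+1) := by
      refine ⟨⟨hg (n+1), fun m => ⟨List.ofFn fun i : Fin (n+1+m) => g i, hg (n+1+m),
        ofFn_prefix _ (by omega), by simp⟩⟩, by simp⟩
    have := extLevel_unique hgl
    have hgn : g n = (List.ofFn fun i : Fin (n+1) => g i).getD n false :=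
      (getD_ofFn (Nat.lt_succ_self n)).symm
    rw [hgn, this, getD_pref (Nat.lt_succ_self n), hfchi]
end

section
/- There exists a computably enumerable infinite binary tree T such that for every n ∈ ℕ the set T_ext^{=n} of extendible nodes of length n has exactly one element, T has exactly one path, and this path is not computable. -/
open Nat.Partrec (Code)
open Nat.Partrec.Code

namespace Stmt1Aux

/-- stage-`s` approximation to the halting set (at input 0). -/
def k (s n : ℕ) : Bool := (evaln s (Denumerable.ofNat Code n) 0).isSome

open Classical in
noncomputable def f (n : ℕ) : Bool := decide (∃ s, k s n = true)

def T : Set (List Bool) :=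
  { τ | ∃ s, τ.length ≤ s ∧ τ = (List.range τ.length).map (k s) }

theorem k_mono {s s' n : ℕ} (h : s ≤ s') (hk : k s n = true) : k s' n = true := by
  simp only [k, Option.isSome_iff_exists] at hk ⊢
  obtain ⟨x, hx⟩ := hk
  exact ⟨x, evaln_mono h hx⟩

theorem f_true {n : ℕ} : f n = true ↔ ∃ s, k s n = true := by simp [f]

theorem settle (i : ℕ) : ∃ S, ∀ s, S ≤ s → k s i = f i := by
  cases hf : f i with
  | false =>
    refine ⟨0, fun s _ => ?_⟩
    by_contra h
    have hks : k s i = true := by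
      cases hks : k s i
      · exact absurd hks h
      · rfl
    exact absurd (f_true.2 ⟨s, hks⟩) (by simp [hf])
  | true =>
    obtain ⟨s, hs⟩ := f_true.1 hf
    exact ⟨s, fun s' hs' => k_mono hs' hs⟩

noncomputable def Sfn (i : ℕ) : ℕ := (settle i).choose

theorem Sfn_spec (i : ℕ) : ∀ s, Sfn i ≤ s → k s i = f i := (settle i).choose_spec

noncomputable def SS (n : ℕ) : ℕ := (Finset.range n).sup Sfn

theorem SS_spec {n s : ℕ} (h : SS n ≤ s) {i : ℕ} (hi : i < n) : k s i = f i :=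
  Sfn_spec i s (le_trans (Finset.le_sup (Finset.mem_range.2 hi)) h)

theorem map_k_eq_map_f {n s : ℕ} (h : SS n ≤ s) :
    (List.range n).map (k s) = (List.range n).map f :=
  List.map_inj_left.2 fun i hi => SS_spec h (List.mem_range.1 hi)

theorem mapf_mem (n : ℕ) : (List.range n).map f ∈ T := by
  refine ⟨max n (SS n), by simp, ?_⟩
  simp only [List.length_map, List.length_range]
  exact (map_k_eq_map_f (le_max_right _ _)).symm

theorem ofFn_eq (g : ℕ → Bool) (n : ℕ) :
    (List.ofFn fun i : Fin n => g i) = (List.range n).map g := by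
  apply List.ext_getElem <;> simp

theorem tree_T : IsBinTree T := by
  rintro σ τ hpre ⟨s, hs, hτ⟩
  have hlen : σ.length ≤ τ.length := hpre.length_le
  refine ⟨s, le_trans hlen hs, ?_⟩
  have hσ : σ = τ.take σ.length := List.prefix_iff_eq_take.1 hpre
  conv_lhs => rw [hσ, hτ]
  rw [← List.map_take, List.take_range, min_eq_left hlen]

theorem range_prefix {n m : ℕ} (h : n ≤ m) : List.range n <+: List.range m := by
  have := List.take_prefix n (List.range m)
  rwa [List.take_range, min_eq_left h] at this

theorem unique_ext {n : ℕ} {σ : List Bool} (h : σ ∈ extLevel T n) :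
    σ = (List.range n).map f := by
  obtain ⟨⟨hσT, hext⟩, hlen⟩ := h
  obtain ⟨τ, hτT, hpre, hτlen⟩ := hext (SS n)
  obtain ⟨s, hs, hτ⟩ := hτT
  have hSs : SS n ≤ s := le_trans (by omega) hs
  have hσ : σ = τ.take n := by rw [← hlen]; exact List.prefix_iff_eq_take.1 hpre
  rw [hσ, hτ, ← List.map_take, List.take_range, min_eq_left (by omega),
    map_k_eq_map_f hSs]

theorem mapf_extLevel (n : ℕ) : (List.range n).map f ∈ extLevel T n := by
  refine ⟨⟨mapf_mem n, fun m => ⟨(List.range (n+m)).map f, mapf_mem (n+m),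
    (range_prefix (by omega)).map f, by simp⟩⟩, by simp⟩

theorem path_f : IsPath T f := fun n => by rw [ofFn_eq]; exact mapf_mem n

theorem path_unique (g : ℕ → Bool) (hg : IsPath T g) : g = f := by
  funext i
  set n := max (i + 1) (SS (i + 1)) with hn
  have hmem := hg n
  rw [ofFn_eq] at hmem
  obtain ⟨s, hs, hτ⟩ := hmem
  simp only [List.length_map, List.length_range] at hs hτ
  have hSs : SS (i + 1) ≤ s := le_trans (le_max_right _ _) hs
  have h1 : (List.range n).map g = (List.range n).map (k s) := hτ
  have h2 : ∀ a ∈ List.range n, g a = k s a := List.map_inj_left.1 h1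
  rw [h2 i (List.mem_range.2 (lt_of_lt_of_le (Nat.lt_succ_self i) (le_max_left _ _))),
    SS_spec hSs (Nat.lt_succ_self i)]

theorem f_not_computable : ¬ Computable f := by
  intro hf
  apply ComputablePred.halting_problem 0
  refine ⟨Classical.decPred _, ?_⟩
  have hc : Computable fun c : Code => f (Encodable.encode c) :=
    hf.comp Computable.encode
  refine hc.of_eq fun c => ?_
  have hiff : (∃ s, k s (Encodable.encode c) = true) ↔ (eval c 0).Dom := by
    simp only [k, Denumerable.ofNat_encode, Option.isSome_iff_exists]
    rw [Part.dom_iff_mem]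
    constructor
    · rintro ⟨s, x, hx⟩; exact ⟨x, evaln_complete.2 ⟨s, hx⟩⟩
    · rintro ⟨x, hx⟩; obtain ⟨s, hs⟩ := evaln_complete.1 hx; exact ⟨s, x, hs⟩
  simp only [f]
  exact decide_eq_decide.2 hiff

theorem k_prim : Primrec₂ k := by
  unfold k
  exact Primrec.option_isSome.comp
    (primrec_evaln.comp (((Primrec.fst.pair ((Primrec.ofNat Code).comp Primrec.snd)).pair
      (Primrec.const 0))))

def q (τ : List Bool) (s : ℕ) : Bool :=
  decide (τ.length ≤ s) && decide (τ = (List.range τ.length).map (k s))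

theorem q_prim : Primrec₂ q := by
  unfold q
  have h1 : Primrec₂ fun (τ : List Bool) (s : ℕ) => decide (τ.length ≤ s) :=
    PrimrecPred.decide (Primrec.nat_le.comp (Primrec.list_length.comp Primrec.fst) Primrec.snd)
  have h2 : Primrec₂ fun (τ : List Bool) (s : ℕ) =>
      decide (τ = (List.range τ.length).map (k s)) := by
    refine PrimrecPred.decide (Primrec.eq.comp Primrec.fst ?_)
    exact Primrec.list_map (Primrec.list_range.comp (Primrec.list_length.comp Primrec.fst))
      (k_prim.comp (Primrec.snd.comp Primrec.fst) Primrec.snd)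
  exact (Primrec.dom_bool₂ (· && ·)).comp h1 h2

theorem q_iff {τ : List Bool} : (∃ s, q τ s = true) ↔ τ ∈ T := by
  simp [q, T, Bool.and_eq_true]

theorem re_T : REPred (· ∈ T) := by
  have hpar : Partrec fun τ : List Bool =>
      (Nat.rfind ((q τ : ℕ →. Bool))).map fun _ => () := by
    apply Partrec.map
    · exact Partrec.rfind (q_prim.to_comp.partrec₂)
    · exact (Computable.const ()).to₂
  refine hpar.of_eq fun τ => ?_
  apply Part.ext'
  · rw [Part.map_Dom, Nat.rfind_dom]
    constructor
    · rintro ⟨n, hn, _⟩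
      exact ⟨q_iff.1 ⟨n, by simpa using hn⟩, trivial⟩
    · rintro ⟨h, -⟩
      obtain ⟨s, hs⟩ := q_iff.2 h
      exact ⟨s, by simpa using hs, fun _ => trivial⟩
  · intros; rfl

end Stmt1Aux

/-- There exists a c.e. infinite binary tree whose sets of extendible nodes of each length
are singletons, which has exactly one path, and whose unique path is not computable. -/
theorem stmt1 :
    ∃ T : Set (List Bool), IsBinTree T ∧ REPred (· ∈ T) ∧
      (∀ n : ℕ, ∃ σ ∈ T, σ.length = n) ∧
      (∀ n : ℕ, ∃! σ : List Bool, σ ∈ extLevel T n) ∧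
      ∃ f : ℕ → Bool, IsPath T f ∧ ¬ Computable f ∧
        ∀ g : ℕ → Bool, IsPath T g → g = f := by
  exact ⟨Stmt1Aux.T, Stmt1Aux.tree_T, Stmt1Aux.re_T,
    fun n => ⟨(List.range n).map Stmt1Aux.f, Stmt1Aux.mapf_mem n, by simp⟩,
    fun n => ⟨(List.range n).map Stmt1Aux.f, Stmt1Aux.mapf_extLevel n,
      fun σ hσ => Stmt1Aux.unique_ext hσ⟩,
    Stmt1Aux.f, Stmt1Aux.path_f, Stmt1Aux.f_not_computable, Stmt1Aux.path_unique⟩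
end

section
/- Let T be a tree of strings over ℕ that is infinite, and suppose there is b ∈ ℕ such that every prefix-free subset P of T is finite with at most b elements. Then T has a path. -/
/-- A tree of strings over ℕ: a set of finite sequences of naturals closed under prefixes. -/
def IsTreeN (T : Set (List ℕ)) : Prop :=
  ∀ σ τ : List ℕ, σ <+: τ → τ ∈ T → σ ∈ T

/-- `f : ℕ → ℕ` is a path of `T`: every initial segment `[f 0, …, f (n-1)]` is in `T`. -/
def IsPathN (T : Set (List ℕ)) (f : ℕ → ℕ) : Prop :=
  ∀ n : ℕ, (List.ofFn fun i : Fin n => f i) ∈ T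

/-- A set of strings over ℕ is prefix-free if no element is a proper prefix of another. -/
def PrefixFreeN (P : Set (List ℕ)) : Prop :=
  ∀ σ ∈ P, ∀ τ ∈ P, σ <+: τ → σ = τ

/-- An infinite tree of strings over ℕ all of whose prefix-free subsets are finite with
at most `b` elements has a path. -/
theorem stmt2 (T : Set (List ℕ)) (hT : IsTreeN T) (hinf : T.Infinite) (b : ℕ)
    (hb : ∀ P : Set (List ℕ), P ⊆ T → PrefixFreeN P → P.Finite ∧ P.ncard ≤ b) :
    ∃ f : ℕ → ℕ, IsPathN T f := by
  classical
  -- Ext σ : infinitely many extensions of σ in T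
  set Ext : List ℕ → Prop := fun σ => {τ | τ ∈ T ∧ σ <+: τ}.Infinite with hExt
  have hmem : ∀ σ, Ext σ → σ ∈ T := by
    intro σ h
    obtain ⟨τ, hτT, hpre⟩ := h.nonempty
    exact hT σ τ hpre hτT
  have hnil : Ext [] := by
    have : {τ | τ ∈ T ∧ [] <+: τ} = T := by
      ext τ; simp [List.nil_prefix]
    rw [hExt]; simpa [this] using hinf
  have key : ∀ σ, Ext σ → ∃ n, Ext (σ ++ [n]) := by
    intro σ h
    by_contra hno
    push_neg at hno
    simp only [hExt, Set.not_infinite] at hno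
    -- children set
    set C : Set ℕ := {n | σ ++ [n] ∈ T} with hC
    have hCfin : C.Finite := by
      have himg : ((fun n => σ ++ [n]) '' C).Finite := by
        refine (hb _ ?_ ?_).1
        · rintro τ ⟨n, hn, rfl⟩; exact hn
        · rintro τ₁ ⟨n₁, _, rfl⟩ τ₂ ⟨n₂, _, rfl⟩ hpre
          exact hpre.eq_of_length (by simp)
      exact Set.Finite.of_finite_image himg (fun a _ c _ h => by simpa using h)
    have hsub : {τ | τ ∈ T ∧ σ <+: τ} ⊆
        insert σ (⋃ n ∈ C, {τ | τ ∈ T ∧ σ ++ [n] <+: τ}) := by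
      rintro τ ⟨hτT, r, rfl⟩
      rcases r with _ | ⟨a, r'⟩
      · simp
      · right
        refine Set.mem_biUnion (show a ∈ C from ?_) ⟨hτT, by simp⟩
        exact hT _ _ (by simp) hτT
    have : {τ | τ ∈ T ∧ σ <+: τ}.Finite :=
      Set.Finite.subset ((hCfin.biUnion fun n _ => hno n).insert σ) hsub
    exact h this
  -- build the branch
  have hstep : ∀ p : {σ : List ℕ // Ext σ}, Ext (p.1 ++ [(key p.1 p.2).choose]) :=
    fun p => (key p.1 p.2).choose_spec
  let g : ℕ → {σ : List ℕ // Ext σ} := fun n =>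
    Nat.rec ⟨[], hnil⟩ (fun _ p => ⟨p.1 ++ [(key p.1 p.2).choose], hstep p⟩) n
  refine ⟨fun n => (key (g n).1 (g n).2).choose, ?_⟩
  have hofn : ∀ n, (List.ofFn fun i : Fin n => (key (g i.1).1 (g i.1).2).choose) = (g n).1 := by
    intro n
    induction n with
    | zero => rfl
    | succ n ih =>
      rw [List.ofFn_succ']
      show (List.ofFn fun i : Fin n => _).concat _ = (g n).1 ++ [_]
      rw [List.concat_eq_append, ih]
  intro n
  rw [hofn n]
  exact hmem _ (g n).2
end

section
/- Let T be a computable tree of strings over ℕ that is infinite, and suppose there is b ∈ ℕ such that every prefix-free subset of T has at most b elements. Then T has a computable path. -/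
def BranchN (T : Set (List ℕ)) : Set (List ℕ) :=
  {τ | τ ∈ T ∧ ∃ a a' : ℕ, a ≠ a' ∧ τ ++ [a] ∈ T ∧ τ ++ [a'] ∈ T}

def DeadN (T : Set (List ℕ)) : Set (List ℕ) :=
  {τ | τ ∈ T ∧ ∀ a : ℕ, τ ++ [a] ∉ T}

lemma pf_finite {T : Set (List ℕ)} {b : ℕ}
    (hb : ∀ F : Finset (List ℕ), ↑F ⊆ T → PrefixFreeN ↑F → F.card ≤ b)
    {S : Set (List ℕ)} (hS : S ⊆ T) (hpf : PrefixFreeN S) : S.Finite := by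
  by_contra h
  obtain ⟨F, hFS, hcard⟩ := (Set.Infinite.exists_subset_card_eq h (b + 1))
  have := hb F (hFS.trans hS) (fun σ hσ τ hτ hp => hpf σ (hFS hσ) τ (hFS hτ) hp)
  omega

lemma dead_pf {T : Set (List ℕ)} (hT : IsTreeN T) : PrefixFreeN (DeadN T) := by
  intro σ hσ τ hτ hpre
  by_contra hne
  obtain ⟨t, rfl⟩ := hpre
  have ht : t ≠ [] := by rintro rfl; simp at hne
  obtain ⟨a, t', rfl⟩ := List.exists_cons_of_ne_nil ht
  exact hσ.2 a (hT (σ ++ [a]) (σ ++ a :: t') ⟨t', by simp⟩ hτ.1)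

lemma chain_lemma {T : Set (List ℕ)} :
    ∀ (n : ℕ) (σ : List ℕ), σ ∈ BranchN T →
    ∀ S : Finset (List ℕ), S.card = n → ↑S ⊆ BranchN T →
    (∀ τ ∈ S, σ <+: τ ∧ σ ≠ τ) →
    (∀ τ ∈ S, ∀ τ' ∈ S, τ <+: τ' ∨ τ' <+: τ) →
    ∃ F : Finset (List ℕ), ↑F ⊆ T ∧ PrefixFreeN ↑F ∧ F.card = n + 2 ∧
      ∀ u ∈ F, σ <+: u ∧ σ.length < u.length := by
  intro n
  induction n with
  | zero =>
    intro σ hσ S hcard _ _ _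
    obtain ⟨hσT, a, a', haa, ha, ha'⟩ := hσ
    have hne : σ ++ [a] ≠ σ ++ [a'] := by simp [haa]
    refine ⟨{σ ++ [a], σ ++ [a']}, ?_, ?_, ?_, ?_⟩
    · intro u hu
      simp only [Finset.coe_insert, Finset.coe_singleton, Set.mem_insert_iff,
        Set.mem_singleton_iff] at hu
      rcases hu with rfl | rfl <;> assumption
    · intro u hu v hv hp
      exact hp.eq_of_length (by
        simp only [Finset.coe_insert, Finset.coe_singleton, Set.mem_insert_iff,
          Set.mem_singleton_iff] at hu hv
        rcases hu with rfl | rfl <;> rcases hv with rfl | rfl <;> simp)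
    · rw [Finset.card_pair hne]
    · intro u hu
      simp only [Finset.mem_insert, Finset.mem_singleton] at hu
      rcases hu with rfl | rfl <;> exact ⟨⟨_, rfl⟩, by simp⟩
  | succ n IH =>
    intro σ hσ S hcard hSB hSext hchain
    have hSne : S.Nonempty := Finset.card_pos.mp (by omega)
    obtain ⟨τ0, hτ0S, hτ0min⟩ := S.exists_min_image List.length hSne
    have hτ0ext : σ <+: τ0 ∧ σ ≠ τ0 := hSext τ0 hτ0S
    have hτ0len : σ.length < τ0.length := by
      rcases Nat.lt_or_ge σ.length τ0.length with h | h
      · exact h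
      · exact absurd (hτ0ext.1.eq_of_length_le h) hτ0ext.2
    set S' := S.erase τ0 with hS'
    have hS'card : S'.card = n := by
      rw [hS', Finset.card_erase_of_mem hτ0S, hcard]
      omega
    have hS'sub : ∀ τ ∈ S', τ ∈ S := fun τ h => Finset.mem_of_mem_erase h
    obtain ⟨F', hF'T, hF'pf, hF'card, hF'ext⟩ :=
      IH τ0 (hSB hτ0S) S' hS'card
        (fun τ hτ => hSB (hS'sub τ hτ))
        (by
          intro τ hτ
          have hτS := hS'sub τ hτ
          have hne := Finset.ne_of_mem_erase hτ
          rcases hchain τ hτS τ0 hτ0S with h | h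
          · exact absurd (h.eq_of_length_le (hτ0min τ hτS)) hne
          · exact ⟨h, fun he => hne he.symm⟩)
        (fun τ hτ τ' hτ' => hchain τ (hS'sub τ hτ) τ' (hS'sub τ' hτ'))
    -- pick the child of σ which is not a prefix of τ0
    obtain ⟨hσT, a, a', haa, ha, ha'⟩ := hσ
    have hd : ∃ d : ℕ, σ ++ [d] ∈ T ∧ ¬ (σ ++ [d] <+: τ0) := by
      by_contra h
      push_neg at h
      have h1 : σ ++ [a] <+: τ0 := h a ha
      have h2 : σ ++ [a'] <+: τ0 := h a' ha'
      have := (List.prefix_of_prefix_length_le h1 h2 (by simp)).eq_of_length (by simp)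
      simp only [List.append_cancel_left_eq] at this
      exact haa (by simpa using this)
    obtain ⟨d, hdT, hdnp⟩ := hd
    have hlen1 : σ.length + 1 ≤ τ0.length := hτ0len
    have hnotmem : σ ++ [d] ∉ F' := by
      intro hmem
      have := (hF'ext _ hmem).2
      simp only [List.length_append, List.length_singleton] at this
      have := ((hF'ext _ hmem).1).length_le
      simp at this
      omega
    refine ⟨insert (σ ++ [d]) F', ?_, ?_, ?_, ?_⟩
    · intro u hu
      simp only [Finset.coe_insert, Set.mem_insert_iff] at hu
      rcases hu with rfl | hu
      · exact hdT
      · exact hF'T hu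
    · intro u hu v hv hp
      simp only [Finset.coe_insert, Set.mem_insert_iff] at hu hv
      rcases hu with rfl | hu <;> rcases hv with rfl | hv
      · rfl
      · -- σ++[d] <+: v with v ∈ F'
        exfalso
        have hτ0v : τ0 <+: v := (hF'ext _ hv).1
        exact hdnp (List.prefix_of_prefix_length_le hp hτ0v (by simpa using hlen1))
      · exfalso
        have hτ0u : τ0 <+: u := (hF'ext _ hu).1
        have hlt : τ0.length < u.length := (hF'ext _ hu).2
        have := hp.length_le
        simp only [List.length_append, List.length_singleton] at this
        omega
      · exact hF'pf u hu v hv hp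
    · rw [Finset.card_insert_of_notMem hnotmem, hF'card]
    · intro u hu
      simp only [Finset.mem_insert] at hu
      rcases hu with rfl | hu
      · exact ⟨⟨_, rfl⟩, by simp⟩
      · exact ⟨hτ0ext.1.trans (hF'ext _ hu).1,
          lt_trans hτ0len (hF'ext _ hu).2⟩

lemma chain_card {T : Set (List ℕ)} {b : ℕ}
    (hb : ∀ F : Finset (List ℕ), ↑F ⊆ T → PrefixFreeN ↑F → F.card ≤ b)
    (C : Finset (List ℕ)) (hne : C.Nonempty) (hCB : ↑C ⊆ BranchN T)
    (hchain : ∀ τ ∈ C, ∀ τ' ∈ C, τ <+: τ' ∨ τ' <+: τ) : C.card + 1 ≤ b := by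
  obtain ⟨τ0, hτ0C, hτ0min⟩ := C.exists_min_image List.length hne
  obtain ⟨F, hFT, hFpf, hFcard, _⟩ :=
    chain_lemma (C.erase τ0).card τ0 (hCB hτ0C) (C.erase τ0) rfl
      (fun τ hτ => hCB (Finset.mem_of_mem_erase hτ))
      (by
        intro τ hτ
        have hτC := Finset.mem_of_mem_erase hτ
        have hne' := Finset.ne_of_mem_erase hτ
        rcases hchain τ hτC τ0 hτ0C with h | h
        · exact absurd (h.eq_of_length_le (hτ0min τ hτC)) hne'
        · exact ⟨h, fun he => hne' he.symm⟩)
      (fun τ hτ τ' hτ' => hchain τ (Finset.mem_of_mem_erase hτ) τ' (Finset.mem_of_mem_erase hτ'))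
  have h1 := hb F hFT hFpf
  have h2 : (C.erase τ0).card = C.card - 1 := Finset.card_erase_of_mem hτ0C
  have h3 : 1 ≤ C.card := Finset.card_pos.mpr hne
  omega

open Classical in
lemma branch_finite {T : Set (List ℕ)} {b : ℕ}
    (hb : ∀ F : Finset (List ℕ), ↑F ⊆ T → PrefixFreeN ↑F → F.card ≤ b) :
    (BranchN T).Finite := by
  classical
  set h : List ℕ → ℕ := fun τ =>
    (τ.inits.toFinset.filter (fun ρ => ρ ∈ BranchN T ∧ ρ ≠ τ)).card with hdef
  have hPre : ∀ τ, ∀ ρ, (ρ ∈ τ.inits.toFinset.filter (fun ρ => ρ ∈ BranchN T ∧ ρ ≠ τ)) ↔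
      (ρ <+: τ ∧ ρ ∈ BranchN T ∧ ρ ≠ τ) := by
    intro τ ρ
    simp [Finset.mem_filter, List.mem_inits]
  -- bound: for τ ∈ Branch, h τ < b
  have hbound : ∀ τ ∈ BranchN T, h τ < b := by
    intro τ hτ
    set P := τ.inits.toFinset.filter (fun ρ => ρ ∈ BranchN T ∧ ρ ≠ τ) with hP
    have hτP : τ ∉ P := by
      intro hmem
      exact ((hPre τ τ).mp hmem).2.2 rfl
    have := chain_card hb (insert τ P) ⟨τ, Finset.mem_insert_self _ _⟩
      (by
        intro ρ hρ
        simp only [Finset.coe_insert, Set.mem_insert_iff] at hρ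
        rcases hρ with rfl | hρ
        · exact hτ
        · exact ((hPre τ ρ).mp hρ).2.1)
      (by
        intro ρ hρ ρ' hρ'
        have hpρ : ρ <+: τ := by
          rcases Finset.mem_insert.mp hρ with rfl | hm
          · exact List.prefix_refl _
          · exact ((hPre τ ρ).mp hm).1
        have hpρ' : ρ' <+: τ := by
          rcases Finset.mem_insert.mp hρ' with rfl | hm
          · exact List.prefix_refl _
          · exact ((hPre τ ρ').mp hm).1
        exact List.prefix_or_prefix_of_prefix hpρ hpρ')
    rw [Finset.card_insert_of_notMem hτP] at this
    have hPc : h τ = P.card := by rw [hdef, hP]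
    omega
  -- strict monotone
  have hmono : ∀ σ ∈ BranchN T, ∀ τ ∈ BranchN T, σ <+: τ → σ ≠ τ → h σ < h τ := by
    intro σ hσ τ hτ hpre hne
    have hsub : insert σ (σ.inits.toFinset.filter (fun ρ => ρ ∈ BranchN T ∧ ρ ≠ σ)) ⊆
        τ.inits.toFinset.filter (fun ρ => ρ ∈ BranchN T ∧ ρ ≠ τ) := by
      intro ρ hρ
      rcases Finset.mem_insert.mp hρ with rfl | hm
      · exact (hPre τ ρ).mpr ⟨hpre, hσ, hne⟩
      · obtain ⟨h1, h2, h3⟩ := (hPre σ ρ).mp hm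
        refine (hPre τ ρ).mpr ⟨h1.trans hpre, h2, ?_⟩
        rintro rfl
        have := h1.length_le
        have hlt : σ.length < ρ.length := by
          rcases Nat.lt_or_ge σ.length ρ.length with h | h
          · exact h
          · exact absurd (hpre.eq_of_length_le h) hne
        omega
    have hσnot : σ ∉ σ.inits.toFinset.filter (fun ρ => ρ ∈ BranchN T ∧ ρ ≠ σ) := by
      intro hmem
      exact ((hPre σ σ).mp hmem).2.2 rfl
    have := Finset.card_le_card hsub
    rw [Finset.card_insert_of_notMem hσnot] at this
    simpa [hdef] using this
  -- levels
  have hsub : BranchN T ⊆ ⋃ k ∈ Finset.range b, {τ ∈ BranchN T | h τ = k} := by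
    intro τ hτ
    simp only [Set.mem_iUnion, Finset.mem_range]
    exact ⟨h τ, hbound τ hτ, hτ, rfl⟩
  refine Set.Finite.subset (Set.Finite.biUnion (Finset.range b).finite_toSet ?_) hsub
  intro k _
  refine pf_finite hb (fun τ hτ => hτ.1.1) ?_
  intro σ hσ τ hτ hpre
  by_contra hne
  have := hmono σ hσ.1 τ hτ.1 hpre hne
  have e1 := hσ.2
  have e2 := hτ.2
  omega

lemma level_nonempty {T : Set (List ℕ)} {b : ℕ} (hT : IsTreeN T)
    (hb : ∀ F : Finset (List ℕ), ↑F ⊆ T → PrefixFreeN ↑F → F.card ≤ b)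
    (hinf : T.Infinite) : ∀ n : ℕ, ∃ σ ∈ T, σ.length = n := by
  intro n
  by_contra hcon
  push_neg at hcon
  have hlt : ∀ σ ∈ T, σ.length < n := by
    intro σ hσ
    rcases Nat.lt_or_ge σ.length n with h | h
    · exact h
    · exact absurd (by
        rw [List.length_take]
        omega : (σ.take n).length = n)
        (hcon (σ.take n) (hT _ σ (List.take_prefix n σ) hσ))
  have hsub : T ⊆ ⋃ k ∈ Finset.range n, {σ ∈ T | σ.length = k} := by
    intro σ hσ
    simp only [Set.mem_iUnion, Finset.mem_range]
    exact ⟨σ.length, hlt σ hσ, hσ, rfl⟩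
  refine hinf (Set.Finite.subset (Set.Finite.biUnion (Finset.range n).finite_toSet ?_) hsub)
  intro k _
  refine pf_finite hb (fun τ hτ => hτ.1) ?_
  intro σ hσ τ hτ hpre
  exact hpre.eq_of_length (by rw [hσ.2, hτ.2])

open scoped Classical in
noncomputable def chainC (T : Set (List ℕ)) (σ0 : List ℕ) : ℕ → List ℕ
  | 0 => σ0
  | k + 1 => chainC T σ0 k ++
      [if h : ∃ a : ℕ, chainC T σ0 k ++ [a] ∈ T then h.choose else 0]

lemma chainC_succ_mem {T : Set (List ℕ)} {σ0 : List ℕ} {k : ℕ}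
    (h : ∃ a : ℕ, chainC T σ0 k ++ [a] ∈ T) :
    chainC T σ0 (k + 1) ∈ T ∧ ∃ d : ℕ, chainC T σ0 (k + 1) = chainC T σ0 k ++ [d] := by
  rw [chainC, dif_pos h]
  exact ⟨h.choose_spec, h.choose, rfl⟩

/-- A computable infinite tree of strings over ℕ all of whose prefix-free subsets have
at most `b` elements has a computable path. -/
theorem stmt4 (T : Set (List ℕ)) (hT : IsTreeN T) (hcomp : ComputablePred (· ∈ T))
    (hinf : T.Infinite) (b : ℕ)
    (hb : ∀ F : Finset (List ℕ), ↑F ⊆ T → PrefixFreeN ↑F → F.card ≤ b) :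
    ∃ f : ℕ → ℕ, Computable f ∧ IsPathN T f := by
  classical
  obtain ⟨χ, hχ, hpeq⟩ := ComputablePred.computable_iff.mp hcomp
  have hmemχ : ∀ τ : List ℕ, τ ∈ T ↔ χ τ = true :=
    fun τ => iff_of_eq (congrFun hpeq τ)
  -- bound on lengths of dead ends and branch points
  have hDfin : (DeadN T ∪ BranchN T).Finite :=
    (pf_finite hb (fun τ hτ => hτ.1) (dead_pf hT)).union (branch_finite hb)
  obtain ⟨M0, hM0⟩ := (hDfin.image List.length).bddAbove
  set M := M0 + 1 with hMdef
  have hM : ∀ τ ∈ DeadN T ∪ BranchN T, τ.length < M := by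
    intro τ hτ
    have := hM0 (Set.mem_image_of_mem List.length hτ)
    omega
  have key : ∀ τ ∈ T, M ≤ τ.length → ∃! a : ℕ, τ ++ [a] ∈ T := by
    intro τ hτ hlen
    have hnd : τ ∉ DeadN T := fun h => by have := hM τ (Or.inl h); omega
    have hnb : τ ∉ BranchN T := fun h => by have := hM τ (Or.inr h); omega
    have hex : ∃ a : ℕ, τ ++ [a] ∈ T := by
      by_contra h
      push_neg at h
      exact hnd ⟨hτ, h⟩
    obtain ⟨a, ha⟩ := hex
    refine ⟨a, ha, ?_⟩
    intro a' ha'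
    by_contra hne
    exact hnb ⟨hτ, a', a, hne, ha', ha⟩
  obtain ⟨σ0, hσ0T, hσ0len⟩ := level_nonempty hT hb hinf M
  set C : ℕ → List ℕ := chainC T σ0 with hCdef
  have hCinv : ∀ k, (C k ∈ T ∧ (C k).length = M + k ∧ σ0 <+: C k) ∧
      ∃ d : ℕ, C (k + 1) = C k ++ [d] := by
    intro k
    induction k with
    | zero =>
      have h0 : C 0 = σ0 := rfl
      have hbase : C 0 ∈ T ∧ (C 0).length = M + 0 ∧ σ0 <+: C 0 := by
        rw [h0]; exact ⟨hσ0T, by simp [hσ0len], List.prefix_refl _⟩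
      have hex : ∃ a : ℕ, C 0 ++ [a] ∈ T := by
        obtain ⟨a, ha, _⟩ := key (C 0) hbase.1 (by omega)
        exact ⟨a, ha⟩
      exact ⟨hbase, (chainC_succ_mem hex).2⟩
    | succ k ih =>
      obtain ⟨⟨h1, h2, h3⟩, d, hd⟩ := ih
      have hdT : C (k + 1) ∈ T ∧ (C (k + 1)).length = M + (k + 1) ∧ σ0 <+: C (k + 1) := by
        have hex : ∃ a : ℕ, C k ++ [a] ∈ T := by
          obtain ⟨a, ha, _⟩ := key (C k) h1 (by omega)
          exact ⟨a, ha⟩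
        refine ⟨(chainC_succ_mem hex).1, ?_, ?_⟩
        · rw [hd]; simp [h2]; omega
        · rw [hd]; exact h3.trans ⟨[d], rfl⟩
      have hex' : ∃ a : ℕ, C (k + 1) ++ [a] ∈ T := by
        obtain ⟨a, ha, _⟩ := key (C (k + 1)) hdT.1 (by omega)
        exact ⟨a, ha⟩
      exact ⟨hdT, (chainC_succ_mem hex').2⟩
  have hCmono : ∀ k j, k ≤ j → C k <+: C j := by
    intro k j hkj
    induction j with
    | zero =>
      have : k = 0 := by omega
      subst this; exact List.prefix_refl _
    | succ j ih =>
      rcases Nat.lt_or_ge k (j + 1) with h | h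
      · refine (ih (by omega)).trans ?_
        obtain ⟨d, hd⟩ := (hCinv j).2
        rw [hd]; exact ⟨_, rfl⟩
      · have : k = j + 1 := by omega
        subst this; exact List.prefix_refl _
  have uniq : ∀ k (τ : List ℕ), τ ∈ T → σ0 <+: τ → τ.length = M + k → τ = C k := by
    intro k
    induction k with
    | zero =>
      intro τ hτ hpre hlen
      exact ((hpre.eq_of_length (by rw [hσ0len, hlen])).symm).trans (by rfl)
    | succ k ih =>
      intro τ hτ hpre hlen
      set τ' := τ.take (M + k) with hτ'def
      have hτ'pre : τ' <+: τ := List.take_prefix _ _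
      have hτ'len : τ'.length = M + k := by rw [hτ'def, List.length_take]; omega
      have hτ'T : τ' ∈ T := hT _ τ hτ'pre hτ
      have hσ0τ' : σ0 <+: τ' :=
        List.prefix_of_prefix_length_le hpre hτ'pre (by rw [hσ0len, hτ'len]; omega)
      have hτ'C : τ' = C k := ih τ' hτ'T hσ0τ' hτ'len
      have hdrop : ∃ d, τ.drop (M + k) = [d] := by
        apply List.length_eq_one_iff.mp
        rw [List.length_drop]
        omega
      obtain ⟨d, hd⟩ := hdrop
      have hτeq : τ = C k ++ [d] := by
        rw [← hτ'C, hτ'def, ← hd, List.take_append_drop]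
      have hCkT := (hCinv k).1.1
      have hCklen := (hCinv k).1.2.1
      obtain ⟨a, ha, hau⟩ := key (C k) hCkT (by omega)
      have hd' : d = a := hau d (show C k ++ [d] ∈ T from hτeq ▸ hτ)
      obtain ⟨d', hd'eq⟩ := (hCinv k).2
      have hd'' : d' = a := hau d' (show C k ++ [d'] ∈ T from hd'eq ▸ (hCinv (k + 1)).1.1)
      rw [hτeq, hd', hd'eq, hd'']
  -- the path
  set f : ℕ → ℕ := fun n => (C (n + 1)).getD n 0 with hfdef
  have hflen : ∀ n, n < (C (n + 1)).length := by
    intro n; rw [(hCinv (n + 1)).1.2.1]; omega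
  have hfval : ∀ n j, n < j → (C j).getD n 0 = f n := by
    intro n j hnj
    obtain ⟨t, ht⟩ := hCmono (n + 1) j hnj
    rw [hfdef]
    simp only
    rw [← ht]
    rw [List.getD_append _ _ _ _ (hflen n)]
  have hpath : IsPathN T f := by
    intro n
    have heq : (List.ofFn fun i : Fin n => f i) = (C n).take n := by
      apply List.ext_getElem
      · simp [(hCinv n).1.2.1]
      · intro i h1 h2
        simp only [List.getElem_ofFn]
        have hi : i < n := by simpa using h1
        have hilen : i < (C n).length := by rw [(hCinv n).1.2.1]; omega
        rw [List.getElem_take]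
        have : (C n)[i] = (C n).getD i 0 := by
          rw [List.getD_eq_getElem]
        rw [this, hfval i n hi]
    rw [heq]
    exact hT _ (C n) (List.take_prefix _ _) (hCinv n).1.1
  refine ⟨f, ?_, hpath⟩
  -- computability
  set F : ℕ → ℕ → Option ℕ := fun n e =>
    (Encodable.decode (α := List ℕ) e).bind fun ρ =>
      bif χ (σ0 ++ ρ) then
        bif decide (ρ.length = n + 1) then some ((σ0 ++ ρ).getD n 0) else none
      else none with hFdef
  have hFcomp : Computable₂ F := by
    refine Computable.option_bind (Computable.decode.comp Computable.snd) ?_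
    have happ : Computable fun p : (ℕ × ℕ) × List ℕ => σ0 ++ p.2 :=
      (Primrec.list_append.comp (Primrec.const σ0) Primrec.snd).to_comp
    have inner : Computable fun p : (ℕ × ℕ) × List ℕ =>
        bif χ (σ0 ++ p.2) then
          bif decide (p.2.length = p.1.1 + 1) then some ((σ0 ++ p.2).getD p.1.1 0) else none
        else none := by
      apply Computable.cond (hχ.comp happ)
      · apply Computable.cond
        · exact (Primrec.eq.comp (Primrec.list_length.comp Primrec.snd)
            (Primrec.succ.comp (Primrec.fst.comp Primrec.fst))).decide.to_comp
        · exact (Primrec.option_some.comp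
            ((Primrec.list_getD 0).comp
              (Primrec.list_append.comp (Primrec.const σ0) Primrec.snd)
              (Primrec.fst.comp Primrec.fst))).to_comp
        · exact Computable.const none
      · exact Computable.const none
    exact inner.to₂
  have hFmem : ∀ n e a, a ∈ F n e ↔ ∃ ρ : List ℕ,
      Encodable.decode (α := List ℕ) e = some ρ ∧ χ (σ0 ++ ρ) = true ∧
      ρ.length = n + 1 ∧ a = (σ0 ++ ρ).getD n 0 := by
    intro n e a
    rw [hFdef]
    simp only [Option.mem_def, Option.bind_eq_some_iff]
    constructor
    · rintro ⟨ρ, hρ, hval⟩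
      refine ⟨ρ, hρ, ?_⟩
      cases hχρ : χ (σ0 ++ ρ) <;> rw [hχρ] at hval
      · simp at hval
      · cases hlρ : decide (ρ.length = n + 1) <;> rw [hlρ] at hval
        · simp at hval
        · simp only [cond_true] at hval
          exact ⟨rfl, of_decide_eq_true hlρ, (Option.some_inj.mp hval).symm⟩
    · rintro ⟨ρ, hρ, h1, h2, rfl⟩
      exact ⟨ρ, hρ, by rw [h1, decide_eq_true h2]; rfl⟩
  have hterm : ∀ n, f n ∈ Nat.rfindOpt (F n) := by
    intro n
    have hkey : ∀ ρ : List ℕ, σ0 ++ ρ ∈ T → ρ.length = n + 1 → σ0 ++ ρ = C (n + 1) := by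
      intro ρ hρT hρlen
      exact uniq (n + 1) (σ0 ++ ρ) hρT ⟨ρ, rfl⟩ (by rw [List.length_append, hσ0len, hρlen])
    set ρ0 := (C (n + 1)).drop M with hρ0
    have hρ0eq : σ0 ++ ρ0 = C (n + 1) := by
      have hpre := (hCinv (n + 1)).1.2.2
      have : σ0 = (C (n + 1)).take M := by
        rw [List.prefix_iff_eq_take.mp hpre, hσ0len]
      rw [this, hρ0, List.take_append_drop]
    have hρ0len : ρ0.length = n + 1 := by
      rw [hρ0, List.length_drop, (hCinv (n + 1)).1.2.1]; omega
    have hwit : f n ∈ F n (Encodable.encode ρ0) := by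
      rw [hFmem]
      refine ⟨ρ0, by simp [Encodable.encodek], ?_, hρ0len, ?_⟩
      · rw [← hmemχ, hρ0eq]
        exact (hCinv (n + 1)).1.1
      · rw [hρ0eq]
    have hdom : (Nat.rfindOpt (F n)).Dom :=
      Nat.rfindOpt_dom.mpr ⟨_, _, hwit⟩
    have hget : (Nat.rfindOpt (F n)).get hdom ∈ Nat.rfindOpt (F n) := Part.get_mem hdom
    obtain ⟨e, he⟩ := Nat.rfindOpt_spec hget
    obtain ⟨ρ, hdec, hχρ, hρlen, hval⟩ := (hFmem n e _).mp he
    have hρT : σ0 ++ ρ ∈ T := (hmemχ _).mpr hχρ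
    have : (Nat.rfindOpt (F n)).get hdom = f n := by
      rw [hval, hkey ρ hρT hρlen]
    rw [← this]
    exact hget
  exact (Partrec.rfindOpt hFcomp).of_eq_tot hterm
end

section
/- Let T be an infinite binary tree and c ∈ ℕ such that every prefix-free subset of T has at most c elements. Then there exists an extendible node σ ∈ T such that any two elements of T extending σ are comparable under the prefix relation; consequently T has exactly one path extending σ. -/
/-- A set of binary strings is prefix-free if no element is a proper prefix of another. -/
def PrefixFreeB (P : Set (List Bool)) : Prop :=
  ∀ σ ∈ P, ∀ τ ∈ P, σ <+: τ → σ = τ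

/-- The path `f` extends the string `σ`, i.e. `σ` is an initial segment of `f`. -/
def ExtendsPath (σ : List Bool) (f : ℕ → Bool) : Prop :=
  σ = List.ofFn fun i : Fin σ.length => f i

/-- Two prefixes of a common list are comparable. -/
lemma prefix_comp {l1 l2 l3 : List Bool} (h1 : l1 <+: l3) (h2 : l2 <+: l3)
    (h : l1.length ≤ l2.length) : l1 <+: l2 := by
  have h1' := List.prefix_iff_eq_take.mp h1
  have h2' := List.prefix_iff_eq_take.mp h2
  rw [List.prefix_iff_eq_take]
  conv_rhs => rw [h2']
  rw [List.take_take, min_eq_left h, ← h1']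

/-- An extendible node has an extendible child. -/
lemma ext_child {T : Set (List Bool)} (hT : IsBinTree T) {σ : List Bool}
    (h : Extendible T σ) : ∃ b : Bool, Extendible T (σ ++ [b]) := by
  suffices hs : ∃ b : Bool, ∀ n : ℕ, ∃ τ ∈ T, σ ++ [b] <+: τ ∧ τ.length = (σ ++ [b]).length + n by
    obtain ⟨b, hb⟩ := hs
    obtain ⟨τ, hτT, hτp, _⟩ := hb 0
    exact ⟨b, hT _ τ hτp hτT, hb⟩
  by_contra hno
  push_neg at hno
  obtain ⟨n0, hn0⟩ := hno false
  obtain ⟨n1, hn1⟩ := hno true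
  obtain ⟨τ, hτT, hτp, hτl⟩ := h.2 (max n0 n1 + 1)
  obtain ⟨δ, rfl⟩ := hτp
  have hδ : δ ≠ [] := by
    intro hδ; rw [hδ] at hτl; simp at hτl
  obtain ⟨d, δ', rfl⟩ := List.exists_cons_of_ne_nil hδ
  have hlen : (σ ++ d :: δ').length = σ.length + 1 + (max n0 n1) := by
    simp at hτl ⊢; omega
  set nd : ℕ := if d then n1 else n0 with hnd
  have hd : ∀ τ ∈ T, σ ++ [d] <+: τ → τ.length ≠ (σ ++ [d]).length + nd := by
    cases d
    · simpa [hnd] using hn0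
    · simpa [hnd] using hn1
  refine hd ((σ ++ d :: δ').take (σ.length + 1 + nd)) (hT _ _ (List.take_prefix _ _) hτT) ?_ ?_
  · rw [List.prefix_take_iff]
    refine ⟨⟨δ', by simp⟩, by simp⟩
  · rw [List.length_take]
    have : nd ≤ max n0 n1 := by cases d <;> simp [hnd]
    simp at hlen ⊢
    omega

/-- In an infinite binary tree all of whose prefix-free subsets have at most `c` elements,
there is an extendible node `σ` such that any two elements of `T` extending `σ` are
comparable; consequently `T` has exactly one path extending `σ`. -/
theorem stmt5 (T : Set (List Bool)) (hT : IsBinTree T)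
    (hinf : ∀ n : ℕ, ∃ σ ∈ T, σ.length = n) (c : ℕ)
    (hc : ∀ F : Finset (List Bool), ↑F ⊆ T → PrefixFreeB ↑F → F.card ≤ c) :
    ∃ σ : List Bool, Extendible T σ ∧
      (∀ τ₁ ∈ T, ∀ τ₂ ∈ T, σ <+: τ₁ → σ <+: τ₂ → τ₁ <+: τ₂ ∨ τ₂ <+: τ₁) ∧
      (∃! f : ℕ → Bool, IsPath T f ∧ ExtendsPath σ f) := by
  -- the root is extendible
  have hroot : Extendible T ([] : List Bool) := by
    obtain ⟨ρ, hρ, hρl⟩ := hinf 0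
    rw [List.length_eq_zero_iff] at hρl
    subst hρl
    refine ⟨hρ, fun n => ?_⟩
    obtain ⟨τ, hτ, hτl⟩ := hinf n
    exact ⟨τ, hτ, List.nil_prefix, by simpa using hτl⟩
  -- the spine: iterate choosing an extendible child
  let step : {σ : List Bool // Extendible T σ} → {σ : List Bool // Extendible T σ} :=
    fun s => ⟨s.val ++ [Classical.choose (ext_child hT s.2)],
      Classical.choose_spec (ext_child hT s.2)⟩
  let π : ℕ → List Bool := fun n => (step^[n] ⟨[], hroot⟩).val
  have hπ_ext : ∀ n, Extendible T (π n) := fun n => (step^[n] ⟨[], hroot⟩).2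
  have hπ_succ : ∀ n, ∃ b : Bool, π (n + 1) = π n ++ [b] := by
    intro n
    have h : π (n + 1) = (step (step^[n] ⟨[], hroot⟩)).val := by
      show (step^[n+1] ⟨[], hroot⟩).val = _
      rw [Function.iterate_succ_apply']
    exact ⟨_, h⟩
  have hπ_len : ∀ n, (π n).length = n := by
    intro n
    induction n with
    | zero => rfl
    | succ n ih =>
      obtain ⟨b, hb⟩ := hπ_succ n
      rw [hb]; simp [ih]
  have hπ_chain : ∀ m n, m ≤ n → π m <+: π n := by
    intro m n h
    induction n with
    | zero => rw [Nat.le_zero.mp h]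
    | succ n ih =>
      rcases Nat.lt_or_ge m (n+1) with h' | h'
      · obtain ⟨b, hb⟩ := hπ_succ n
        exact (ih (by omega)).trans (hb ▸ List.prefix_append _ _)
      · rw [Nat.le_antisymm h h']
  -- only finitely many off-spine children exist in T
  have key : ∃ M : ℕ, ∀ j, M ≤ j → ∀ b : Bool, π j ++ [b] ∈ T → π j ++ [b] = π (j + 1) := by
    by_contra hno
    push_neg at hno
    -- hno : ∀ M, ∃ j, M ≤ j ∧ ∃ b, π j ++ [b] ∈ T ∧ π j ++ [b] ≠ π (j+1)
    set P : ℕ → Prop := fun j => ∃ b : Bool, π j ++ [b] ∈ T ∧ π j ++ [b] ≠ π (j + 1) with hP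
    have H : ∀ M : ℕ, ∃ j, M ≤ j ∧ P j := hno
    let h : ℕ → ℕ := fun k => Nat.rec (Classical.choose (H 0))
      (fun _ prev => Classical.choose (H (prev + 1))) k
    have hh0 : P (h 0) := (Classical.choose_spec (H 0)).2
    have hhs : ∀ k, h k + 1 ≤ h (k + 1) ∧ P (h (k + 1)) := by
      intro k
      exact Classical.choose_spec (H (h k + 1))
    have hP' : ∀ k, P (h k) := by
      intro k
      cases k with
      | zero => exact hh0
      | succ k => exact (hhs k).2
    have hmono : StrictMono h := strictMono_nat_of_lt_succ (fun k => by have := (hhs k).1; omega)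
    let B : ℕ → List Bool := fun k => π (h k) ++ [Classical.choose (hP' k)]
    have hB_mem : ∀ k, B k ∈ T := fun k => (Classical.choose_spec (hP' k)).1
    have hB_ne : ∀ k, B k ≠ π (h k + 1) := fun k => (Classical.choose_spec (hP' k)).2
    have hB_len : ∀ k, (B k).length = h k + 1 := by
      intro k; show (π (h k) ++ _).length = _; simp [hπ_len]
    -- B k is never a prefix of B l for k ≠ l
    have hB_incomp : ∀ k l, B k <+: B l → k = l := by
      intro k l hkl
      by_contra hne
      rcases Nat.lt_or_ge k l with h' | h'
      · have hlt : h k < h l := hmono h'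
        have h1 : B k <+: π (h l) := by
          refine prefix_comp hkl (List.prefix_append _ _) ?_
          rw [hB_len, hπ_len]; omega
        have h2 : π (h k + 1) <+: π (h l) := hπ_chain _ _ (by omega)
        have : B k = π (h k + 1) := by
          refine (prefix_comp h1 h2 ?_).eq_of_length ?_
          · rw [hB_len, hπ_len]
          · rw [hB_len, hπ_len]
        exact hB_ne k this
      · have h' : l < k := by omega
        have := hkl.length_le
        rw [hB_len, hB_len] at this
        have := hmono h'
        omega
    -- build a prefix-free set of size c+1
    let F : Finset (List Bool) := (Finset.range (c + 1)).image B
    have hBinj : Set.InjOn B ↑(Finset.range (c + 1)) := by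
      intro a _ b _ hab
      exact hB_incomp a b (hab ▸ List.prefix_refl _)
    have hcard : F.card = c + 1 := by
      rw [Finset.card_image_of_injOn hBinj, Finset.card_range]
    have hsub : ↑F ⊆ T := by
      intro x hx
      simp only [F, Finset.coe_image, Set.mem_image] at hx
      obtain ⟨k, _, rfl⟩ := hx
      exact hB_mem k
    have hpf : PrefixFreeB ↑F := by
      intro x hx y hy hxy
      simp only [F, Finset.coe_image, Set.mem_image] at hx hy
      obtain ⟨k, _, rfl⟩ := hx
      obtain ⟨l, _, rfl⟩ := hy
      rw [hB_incomp k l hxy]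
    have := hc F hsub hpf
    omega
  obtain ⟨M, hM⟩ := key
  -- every node of T extending π M lies on the spine
  have spine : ∀ k, ∀ τ ∈ T, π M <+: τ → τ.length = M + k → τ = π (M + k) := by
    intro k
    induction k with
    | zero =>
      intro τ _ hp hl
      exact (hp.eq_of_length (by rw [hπ_len]; omega)).symm
    | succ k ih =>
      intro τ hτ hp hl
      set ρ : List Bool := τ.take (M + k) with hρ
      have hρT : ρ ∈ T := hT _ _ (List.take_prefix _ _) hτ
      have hρp : π M <+: ρ := by
        rw [hρ, List.prefix_take_iff]
        exact ⟨hp, by rw [hπ_len]; omega⟩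
      have hρl : ρ.length = M + k := by rw [hρ, List.length_take]; omega
      have hρ_eq : ρ = π (M + k) := ih ρ hρT hρp hρl
      have hdrop : ∃ b : Bool, τ.drop (M + k) = [b] := by
        apply List.length_eq_one_iff.mp
        rw [List.length_drop]; omega
      obtain ⟨b, hb⟩ := hdrop
      have hτ_eq : τ = π (M + k) ++ [b] := by
        rw [← hρ_eq, ← hb, hρ, List.take_append_drop]
      rw [hτ_eq]
      have := hM (M + k) (by omega) b (hτ_eq ▸ hτ)
      rw [this]
      rfl
  have spine' : ∀ τ ∈ T, π M <+: τ → τ = π τ.length := by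
    intro τ hτ hp
    have hle : M ≤ τ.length := by
      have := hp.length_le; rw [hπ_len] at this; omega
    have h2 : M + (τ.length - M) = τ.length := by omega
    calc τ = π (M + (τ.length - M)) := spine (τ.length - M) τ hτ hp (by omega)
      _ = π τ.length := by rw [h2]
  refine ⟨π M, hπ_ext M, ?_, ?_⟩
  · -- comparability
    intro τ₁ h₁ τ₂ h₂ hp₁ hp₂
    rw [spine' τ₁ h₁ hp₁, spine' τ₂ h₂ hp₂]
    rcases Nat.le_total τ₁.length τ₂.length with h | h
    · exact Or.inl (hπ_chain _ _ h)
    · exact Or.inr (hπ_chain _ _ h)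
  · -- the unique path
    set f : ℕ → Bool := fun n => (π (n + 1)).getLastD false with hf
    have hfn : ∀ n, (List.ofFn fun i : Fin n => f i) = π n := by
      intro n
      induction n with
      | zero => rfl
      | succ n ih =>
        have hsplit : (List.ofFn fun i : Fin (n + 1) => f i) =
            (List.ofFn fun i : Fin n => f i) ++ [f n] := by
          rw [List.ofFn_succ', List.concat_eq_append]
          simp
        obtain ⟨b, hb⟩ := hπ_succ n
        have hfb : f n = b := by rw [hf]; simp [hb]
        rw [hsplit, ih, hb, hfb]
    refine ⟨f, ⟨?_, ?_⟩, ?_⟩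
    · intro n
      rw [hfn n]
      exact (hπ_ext n).1
    · show π M = List.ofFn fun i : Fin (π M).length => f i
      have : (List.ofFn fun i : Fin (π M).length => f i) = π (π M).length := hfn _
      rw [this, hπ_len]
    · rintro g ⟨hgpath, hgext⟩
      set L : ℕ → List Bool := fun n => List.ofFn fun i : Fin n => g i with hL
      have hLmem : ∀ n, L n ∈ T := hgpath
      have hLsucc : ∀ n, L (n + 1) = L n ++ [g n] := by
        intro n
        rw [hL]
        simp only
        rw [List.ofFn_succ', List.concat_eq_append]
        congr 1
      have hLchain : ∀ m n, m ≤ n → L m <+: L n := by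
        intro m n h
        induction n with
        | zero => rw [Nat.le_zero.mp h]
        | succ n ih =>
          rcases Nat.lt_or_ge m (n+1) with h' | h'
          · exact (ih (by omega)).trans (hLsucc n ▸ List.prefix_append _ _)
          · rw [Nat.le_antisymm h h']
      have hLM : π M = L M := by
        have : π M = L (π M).length := hgext
        rw [this, hπ_len]
      have hLlen : ∀ n, (L n).length = n := by intro n; simp [hL]
      funext n
      have h1 : L (M + n + 1) = π (M + n + 1) := by
        have h := spine' (L (M + n + 1)) (hLmem _) (hLM ▸ hLchain M _ (by omega))
        rwa [hLlen] at h
      have h2 : (List.ofFn fun i : Fin (M + n + 1) => g i) = List.ofFn fun i : Fin (M + n + 1) => f i := by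
        rw [hfn]
        exact h1
      have h3 := List.ofFn_inj.mp h2
      have := congrFun h3 ⟨n, by omega⟩
      simpa using this
end

section
/- Let T be an infinite binary tree, and let b, n ∈ ℕ be such that for every m the set T_ext^{=m} of extendible nodes of length m has at most b elements, and T_ext^{=n} has exactly b elements. Then for every extendible σ ∈ T of length n, the set of extendible nodes of T extending σ is totally ordered by the prefix relation; equivalently, T has exactly one path extending σ. -/
lemma prefix_take_of {σ ρ : List Bool} (h : σ <+: ρ) {a : ℕ} (ha : σ.length ≤ a) :
    σ <+: ρ.take a :=
  List.prefix_take_iff.mpr ⟨h, ha⟩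

/-- prefixes of extendible nodes are extendible -/
lemma ext_prefix {T : Set (List Bool)} (hT : IsBinTree T) {σ τ : List Bool}
    (h : σ <+: τ) (hτ : Extendible T τ) : Extendible T σ := by
  refine ⟨hT σ τ h hτ.1, fun k => ?_⟩
  obtain ⟨ρ, hρT, hτρ, hρl⟩ := hτ.2 (σ.length + k)
  refine ⟨ρ.take (σ.length + k), hT _ ρ (List.take_prefix _ _) hρT, ?_, ?_⟩
  · exact prefix_take_of (h.trans hτρ) (by omega)
  · rw [List.length_take]; omega

/-- extendible node has an extendible extension one longer -/
lemma ext_succ {T : Set (List Bool)} (hT : IsBinTree T) {σ : List Bool}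
    (hσ : Extendible T σ) :
    ∃ τ, Extendible T τ ∧ σ <+: τ ∧ τ.length = σ.length + 1 := by
  classical
  set s := σ.length
  have hch : ∀ j : ℕ, ∃ τ ∈ T, σ <+: τ ∧ τ.length = s + (j + 1) := fun j => hσ.2 (j + 1)
  choose τ hτT hστ hτl using hch
  haveI : Finite {l : List Bool // l.length = s + 1} :=
    inferInstanceAs (Finite (List.Vector Bool (s+1)))
  obtain ⟨⟨p, hp⟩, hfib⟩ := Finite.exists_infinite_fiber
    (fun j : ℕ => (⟨(τ j).take (s+1),
      by have := hτl j; rw [List.length_take]; omega⟩ :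
      {l : List Bool // l.length = s + 1}))
  have hfib' := Set.infinite_coe_iff.mp hfib
  have hbig : ∀ a : ℕ, ∃ j, a < j ∧ (τ j).take (s+1) = p := by
    intro a
    obtain ⟨j, hj, hja⟩ := hfib'.exists_gt a
    exact ⟨j, hja, congrArg Subtype.val hj⟩
  obtain ⟨j₀, _, hj₀⟩ := hbig 0
  refine ⟨p, ⟨?_, ?_⟩, ?_, hp⟩
  · rw [← hj₀]; exact hT _ _ (List.take_prefix _ _) (hτT j₀)
  · intro k
    obtain ⟨j, hjk, hj⟩ := hbig k
    refine ⟨(τ j).take (s + 1 + k), hT _ _ (List.take_prefix _ _) (hτT j), ?_, ?_⟩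
    · rw [← hj]
      exact List.take_prefix_take_left (by omega)
    · have := hτl j; rw [List.length_take, hp]; omega
  · rw [← hj₀]
    exact prefix_take_of (hστ j₀) (by omega)

/-- extendible node has an extendible extension of any given extra length -/
lemma ext_extension {T : Set (List Bool)} (hT : IsBinTree T) {σ : List Bool}
    (hσ : Extendible T σ) (k : ℕ) :
    ∃ τ, Extendible T τ ∧ σ <+: τ ∧ τ.length = σ.length + k := by
  induction k with
  | zero => exact ⟨σ, hσ, List.prefix_refl σ, rfl⟩
  | succ k ih =>
    obtain ⟨τ, hτ, hστ, hτl⟩ := ih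
    obtain ⟨ρ, hρ, hτρ, hρl⟩ := ext_succ hT hτ
    exact ⟨ρ, hρ, hστ.trans hτρ, by omega⟩

/-- uniqueness of extendible nodes at level `n+m` above a given prefix -/
lemma level_unique {T : Set (List Bool)} (hT : IsBinTree T) {b n : ℕ}
    (hb : ∀ m : ℕ, ∀ F : Finset (List Bool), ↑F ⊆ extLevel T m → F.card ≤ b)
    {F : Finset (List Bool)} (hF : ↑F = extLevel T n) (hFc : F.card = b)
    (m : ℕ) {τ₁ τ₂ : List Bool}
    (h₁ : Extendible T τ₁) (h₂ : Extendible T τ₂)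
    (l₁ : τ₁.length = n + m) (l₂ : τ₂.length = n + m)
    (heq : τ₁.take n = τ₂.take n) : τ₁ = τ₂ := by
  classical
  by_contra hne
  set ρ := τ₁.take n with hρ
  have hρext : Extendible T ρ := ext_prefix hT (List.take_prefix _ _) h₁
  have hρlen : ρ.length = n := by rw [hρ, List.length_take]; omega
  have hρmem : ρ ∈ extLevel T n := ⟨hρext, hρlen⟩
  have hρF : ρ ∈ F := by rw [← Finset.mem_coe, hF]; exact hρmem
  have hbpos : 1 ≤ b := by rw [← hFc]; exact Finset.card_pos.mpr ⟨ρ, hρF⟩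
  have hchoice : ∀ α : List Bool, α ∈ extLevel T n →
      ∃ τ, Extendible T τ ∧ α <+: τ ∧ τ.length = n + m := by
    intro α hα
    obtain ⟨τ, h, hp, hl⟩ := ext_extension hT hα.1 m
    exact ⟨τ, h, hp, by rw [hl, hα.2]⟩
  choose! e he1 he2 he3 using hchoice
  have htake : ∀ α ∈ extLevel T n, (e α).take n = α := by
    intro α hα
    have h' := List.prefix_iff_eq_take.mp (he2 α hα)
    rw [hα.2] at h'
    exact h'.symm
  have hmemF : ∀ α ∈ F, α ∈ extLevel T n := by
    intro α hα; rw [← Finset.mem_coe, hF] at hα; exact hα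
  set G : Finset (List Bool) := ((F.erase ρ).image e) ∪ {τ₁, τ₂} with hG
  have hGsub : ↑G ⊆ extLevel T (n + m) := by
    intro x hx
    rw [Finset.mem_coe, hG, Finset.mem_union] at hx
    rcases hx with hx | hx
    · obtain ⟨α, hα, rfl⟩ := Finset.mem_image.mp hx
      have hα' := hmemF α (Finset.mem_of_mem_erase hα)
      exact ⟨he1 α hα', he3 α hα'⟩
    · rcases Finset.mem_insert.mp hx with rfl | hx
      · exact ⟨h₁, l₁⟩
      · rw [Finset.mem_singleton] at hx; subst hx; exact ⟨h₂, l₂⟩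
  have hdisj : Disjoint ((F.erase ρ).image e) ({τ₁, τ₂} : Finset (List Bool)) := by
    rw [Finset.disjoint_right]
    intro x hx hx'
    obtain ⟨α, hα, rfl⟩ := Finset.mem_image.mp hx'
    have hα' := hmemF α (Finset.mem_of_mem_erase hα)
    have hαρ : α ≠ ρ := (Finset.mem_erase.mp hα).1
    rcases Finset.mem_insert.mp hx with h | h
    · exact hαρ (by rw [← htake α hα', h, ← hρ])
    · rw [Finset.mem_singleton] at h
      exact hαρ (by rw [← htake α hα', h, ← heq])
  have hinjOn : Set.InjOn e ↑(F.erase ρ) := by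
    intro α₁ h1 α₂ h2 hee
    have h1' := hmemF α₁ (Finset.mem_of_mem_erase (Finset.mem_coe.mp h1))
    have h2' := hmemF α₂ (Finset.mem_of_mem_erase (Finset.mem_coe.mp h2))
    rw [← htake α₁ h1', ← htake α₂ h2', hee]
  have hcard : G.card = (b - 1) + 2 := by
    rw [hG, Finset.card_union_of_disjoint hdisj,
      Finset.card_image_of_injOn hinjOn, Finset.card_erase_of_mem hρF, hFc,
      Finset.card_pair hne]
  have := hb (n + m) G hGsub
  omega

lemma prefix_getD {l₁ l₂ : List Bool} (h : l₁ <+: l₂) {i : ℕ} (hi : i < l₁.length) :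
    l₁.getD i false = l₂.getD i false := by
  have h2 : i < l₂.length := lt_of_lt_of_le hi h.length_le
  rw [List.getD_eq_getElem _ _ hi, List.getD_eq_getElem _ _ h2]
  exact h.getElem hi

lemma ofFn_prefix_ofFn (f : ℕ → Bool) {a b : ℕ} (h : a ≤ b) :
    (List.ofFn fun i : Fin a => f i) <+: (List.ofFn fun i : Fin b => f i) := by
  have he : (List.ofFn fun i : Fin a => f i) =
      (List.ofFn fun i : Fin b => f i).take a := by
    apply List.ext_getElem
    · simp; omega
    · intro i h1 h2
      simp [List.getElem_take]
  rw [he]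
  exact List.take_prefix _ _

/-- If every level of extendible nodes of an infinite binary tree has at most `b` elements
and level `n` has exactly `b` elements, then for every extendible `σ` of length `n` the
extendible nodes extending `σ` are totally ordered by the prefix relation; equivalently
there is exactly one path extending `σ`. -/
theorem stmt7 (T : Set (List Bool)) (hT : IsBinTree T)
    (hinf : ∀ n : ℕ, ∃ σ ∈ T, σ.length = n) (b n : ℕ)
    (hb : ∀ m : ℕ, ∀ F : Finset (List Bool), ↑F ⊆ extLevel T m → F.card ≤ b)
    (hn : ∃ F : Finset (List Bool), ↑F = extLevel T n ∧ F.card = b) :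
    ∀ σ ∈ extLevel T n,
      (∀ τ₁ τ₂ : List Bool, Extendible T τ₁ → Extendible T τ₂ →
        σ <+: τ₁ → σ <+: τ₂ → τ₁ <+: τ₂ ∨ τ₂ <+: τ₁) ∧
      (∃! f : ℕ → Bool, IsPath T f ∧ ExtendsPath σ f) := by
  obtain ⟨F, hF, hFc⟩ := hn
  rintro σ ⟨hσ, hσl⟩
  -- uniqueness of extendible extensions of σ of a given length
  have huniq : ∀ m : ℕ, ∀ τ₁ τ₂ : List Bool, Extendible T τ₁ → Extendible T τ₂ →
      σ <+: τ₁ → σ <+: τ₂ → τ₁.length = n + m → τ₂.length = n + m → τ₁ = τ₂ := by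
    intro m τ₁ τ₂ h₁ h₂ p₁ p₂ l₁ l₂
    refine level_unique hT hb hF hFc m h₁ h₂ l₁ l₂ ?_
    have e₁ := List.prefix_iff_eq_take.mp p₁
    have e₂ := List.prefix_iff_eq_take.mp p₂
    rw [hσl] at e₁ e₂
    rw [← e₁, ← e₂]
  -- part 1: extensions are totally ordered
  have hkey : ∀ τ₁ τ₂ : List Bool, Extendible T τ₁ → Extendible T τ₂ →
      σ <+: τ₁ → σ <+: τ₂ → τ₁.length ≤ τ₂.length → τ₁ <+: τ₂ := by
    intro τ₁ τ₂ h₁ h₂ p₁ p₂ hle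
    have hn1 : n ≤ τ₁.length := by
      have := p₁.length_le; omega
    set ρ := τ₂.take τ₁.length with hρ
    have hρext : Extendible T ρ := ext_prefix hT (List.take_prefix _ _) h₂
    have hρl : ρ.length = τ₁.length := by rw [hρ, List.length_take]; omega
    have hρσ : σ <+: ρ := prefix_take_of p₂ (by omega)
    have : τ₁ = ρ := huniq (τ₁.length - n) τ₁ ρ h₁ hρext p₁ hρσ (by omega) (by omega)
    rw [this]
    exact List.take_prefix _ _
  constructor
  · intro τ₁ τ₂ h₁ h₂ p₁ p₂
    rcases le_total τ₁.length τ₂.length with hle | hle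
    · exact Or.inl (hkey τ₁ τ₂ h₁ h₂ p₁ p₂ hle)
    · exact Or.inr (hkey τ₂ τ₁ h₂ h₁ p₂ p₁ hle)
  -- part 2: unique path
  · choose g hg1 hg2 hg3 using ext_extension hT hσ
    rw [hσl] at hg3
    -- g is the unique extendible extension of σ at each level
    have hgu : ∀ m : ℕ, ∀ τ : List Bool, Extendible T τ → σ <+: τ →
        τ.length = n + m → τ = g m := by
      intro m τ hτ hστ hl
      exact huniq m τ (g m) hτ (hg1 m) hστ (hg2 m) hl (hg3 m)
    have hmono : ∀ m m' : ℕ, m ≤ m' → g m <+: g m' := by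
      intro m m' hmm
      have h1 : (g m').take (n + m) <+: g m' := List.take_prefix _ _
      have h2 : Extendible T ((g m').take (n + m)) := ext_prefix hT h1 (hg1 m')
      have h3 : σ <+: (g m').take (n + m) := prefix_take_of (hg2 m') (by omega)
      have h4 : ((g m').take (n + m)).length = n + m := by
        rw [List.length_take, hg3 m']; omega
      rw [hgu m _ h2 h3 h4] at h1
      exact h1
    set f : ℕ → Bool := fun k => (g (k + 1)).getD k false with hf
    have hval : ∀ (k m : ℕ), k < n + m → (g m).getD k false = f k := by
      intro k m hk
      rcases le_total (k + 1) m with h | h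
      · exact (prefix_getD (hmono (k+1) m h) (by rw [hg3]; omega)).symm
      · exact prefix_getD (hmono m (k+1) h) (by rw [hg3]; omega)
    have hofn : ∀ m : ℕ, (List.ofFn fun i : Fin (n + m) => f i) = g m := by
      intro m
      apply List.ext_getElem
      · rw [List.length_ofFn, hg3]
      · intro i h1 h2
        rw [List.getElem_ofFn]
        have : (g m).getD i false = f i := hval i m (by simpa using h1)
        rw [List.getD_eq_getElem _ _ h2] at this
        rw [this]
    have hpath : IsPath T f := by
      intro L
      have hpre : (List.ofFn fun i : Fin L => f i) <+:
          (List.ofFn fun i : Fin (n + L) => f i) := ofFn_prefix_ofFn f (by omega)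
      rw [hofn L] at hpre
      exact hT _ _ hpre (hg1 L).1
    have hext : ExtendsPath σ f := by
      have hg0 : g 0 = σ := (hgu 0 σ hσ (List.prefix_refl σ) (by omega)).symm
      unfold ExtendsPath
      apply List.ext_getElem
      · rw [List.length_ofFn]
      · intro i h1 h2
        rw [List.getElem_ofFn]
        have hi : i < n := by rw [← hσl]; exact h1
        have : (g 0).getD i false = f i := hval i 0 (by omega)
        rw [hg0, List.getD_eq_getElem _ _ h1] at this
        exact this
    refine ⟨f, ⟨hpath, hext⟩, ?_⟩
    rintro f' ⟨hpath', hext'⟩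
    funext k
    set L := k + 1 with hL
    set l' : List Bool := List.ofFn fun i : Fin (n + L) => f' i with hl'
    have hl'len : l'.length = n + L := by rw [hl', List.length_ofFn]
    have hl'T : l' ∈ T := hpath' (n + L)
    have hl'σ : σ <+: l' := by
      have := ofFn_prefix_ofFn f' (show σ.length ≤ n + L by omega)
      rw [← hext'] at this
      exact this
    have hl'ext : Extendible T l' := by
      refine ⟨hl'T, fun j => ?_⟩
      refine ⟨List.ofFn fun i : Fin (n + L + j) => f' i, hpath' (n + L + j),
        ofFn_prefix_ofFn f' (by omega), by rw [List.length_ofFn, hl'len]⟩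
    have heq : l' = g L := hgu L l' hl'ext hl'σ hl'len
    have h1 : f' k = l'.getD k false := by
      rw [hl', List.getD_eq_getElem _ _ (by rw [List.length_ofFn]; omega),
        List.getElem_ofFn]
    rw [h1, heq]
end

section
/- Let T be a computably enumerable infinite binary tree and c ∈ ℕ such that every prefix-free subset of T has at most c elements. Then T has a computable path. -/
namespace S9

lemma exists_child_prefix {σ τ : List Bool} (h : σ <+: τ) (hl : σ.length < τ.length) :
    ∃ b, σ ++ [b] <+: τ := by
  obtain ⟨r, rfl⟩ := h
  cases r with
  | nil => simp at hl
  | cons b r => exact ⟨b, ⟨r, by simp⟩⟩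

lemma ext_of_unbounded {T : Set (List Bool)} (hT : IsBinTree T) {σ : List Bool} (hσ : σ ∈ T)
    (h : ∀ n, ∃ τ ∈ T, σ <+: τ ∧ n ≤ τ.length) : Extendible T σ := by
  refine ⟨hσ, fun n => ?_⟩
  obtain ⟨τ, hτT, hpre, hlen⟩ := h (σ.length + n)
  refine ⟨τ.take (σ.length + n), hT _ _ (List.take_prefix _ _) hτT,
    List.prefix_take_iff.mpr ⟨hpre, by omega⟩, ?_⟩
  rw [List.length_take]; omega

lemma bounded_of_not_ext {T : Set (List Bool)} (hT : IsBinTree T) {σ : List Bool}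
    (hne : ¬ Extendible T σ) :
    ∃ N, ∀ τ ∈ T, σ <+: τ → τ.length < N := by
  by_cases hσ : σ ∈ T
  · have h2 : ¬ ∀ n, ∃ τ ∈ T, σ <+: τ ∧ τ.length = σ.length + n := fun hh => hne ⟨hσ, hh⟩
    push_neg at h2
    obtain ⟨n, hn⟩ := h2
    refine ⟨σ.length + n, fun τ hτ hpre => ?_⟩
    by_contra hge; push_neg at hge
    exact hn (τ.take (σ.length + n)) (hT _ _ (List.take_prefix _ _) hτ)
      (List.prefix_take_iff.mpr ⟨hpre, by omega⟩) (by rw [List.length_take]; omega)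
  · exact ⟨0, fun τ hτ hpre => absurd (hT _ _ hpre hτ) hσ⟩

lemma exists_ext_child {T : Set (List Bool)} (hT : IsBinTree T) {σ : List Bool}
    (h : Extendible T σ) : ∃ b, Extendible T (σ ++ [b]) := by
  by_contra hcon
  push_neg at hcon
  obtain ⟨N0, h0⟩ := bounded_of_not_ext hT (hcon false)
  obtain ⟨N1, h1⟩ := bounded_of_not_ext hT (hcon true)
  obtain ⟨τ, hτ, hpre, hlen⟩ := h.2 (N0 + N1 + 1)
  obtain ⟨b, hb⟩ := exists_child_prefix hpre (by omega)
  cases b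
  · exact absurd (h0 τ hτ hb) (by omega)
  · exact absurd (h1 τ hτ hb)  (by omega)

lemma extLevel_finite (T : Set (List Bool)) (n : ℕ) : (extLevel T n).Finite :=
  (List.finite_length_eq Bool n).subset fun σ hσ => hσ.2

lemma extLevel_card_le {T : Set (List Bool)} {c : ℕ}
    (hc : ∀ F : Finset (List Bool), ↑F ⊆ T → PrefixFreeB ↑F → F.card ≤ c) (n : ℕ) :
    (extLevel T n).ncard ≤ c := by
  classical
  have hfin := extLevel_finite T n
  rw [Set.ncard_eq_toFinset_card _ hfin]
  apply hc
  · intro σ hσ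
    rw [Finset.mem_coe, Set.Finite.mem_toFinset] at hσ
    exact hσ.1.1
  · intro σ hσ τ hτ hpre
    rw [Finset.mem_coe, Set.Finite.mem_toFinset] at hσ hτ
    exact hpre.eq_of_length (by rw [hσ.2, hτ.2])

lemma extLevel_mono {T : Set (List Bool)} (hT : IsBinTree T) (n : ℕ) :
    (extLevel T n).ncard ≤ (extLevel T (n+1)).ncard := by
  classical
  choose g hg using fun (σ : List Bool) (h : σ ∈ extLevel T n) => exists_ext_child hT h.1
  set φ : List Bool → List Bool := fun σ => if h : σ ∈ extLevel T n then σ ++ [g σ h] else σ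
    with hφ
  refine Set.ncard_le_ncard_of_injOn φ (fun σ hσ => ?_) (fun σ hσ τ hτ heq => ?_)
    (extLevel_finite T (n+1))
  · rw [hφ]; simp only [dif_pos hσ]
    exact ⟨hg σ hσ, by simp [hσ.2]⟩
  · rw [hφ] at heq; simp only [dif_pos hσ, dif_pos hτ] at heq
    exact (List.append_inj heq (by rw [hσ.2, hτ.2])).1

lemma extLevel_nonempty {T : Set (List Bool)} (hT : IsBinTree T)
    (hinf : ∀ n : ℕ, ∃ σ ∈ T, σ.length = n) (n : ℕ) : ∃ σ, σ ∈ extLevel T n := by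
  induction n with
  | zero =>
    refine ⟨[], ⟨?_, rfl⟩⟩
    have hnil : [] ∈ T := by
      obtain ⟨σ, hσ, hl⟩ := hinf 0
      rwa [List.length_eq_zero_iff.mp hl] at hσ
    refine ext_of_unbounded hT hnil fun n => ?_
    obtain ⟨σ, hσ, hl⟩ := hinf n
    exact ⟨σ, hσ, List.nil_prefix, by omega⟩
  | succ n ih =>
    obtain ⟨σ, hσ⟩ := ih
    obtain ⟨b, hb⟩ := exists_ext_child hT hσ.1
    exact ⟨σ ++ [b], hb, by simp [hσ.2]⟩

lemma exists_const_level {T : Set (List Bool)} (hT : IsBinTree T) {c : ℕ}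
    (hc : ∀ F : Finset (List Bool), ↑F ⊆ T → PrefixFreeB ↑F → F.card ≤ c) :
    ∃ N, ∀ n, N ≤ n → (extLevel T n).ncard = (extLevel T N).ncard := by
  have hmono : Monotone fun n => (extLevel T n).ncard :=
    monotone_nat_of_le_succ (extLevel_mono hT)
  have hbdd : BddAbove (Set.range fun n => (extLevel T n).ncard) :=
    ⟨c, by rintro x ⟨n, rfl⟩; exact extLevel_card_le hc n⟩
  obtain ⟨N, hN⟩ := Nat.sSup_mem (Set.range_nonempty _) hbdd
  refine ⟨N, fun n hn => ?_⟩
  have h1 := hmono hn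
  have h2 : (extLevel T n).ncard ≤ sSup (Set.range fun n => (extLevel T n).ncard) :=
    le_csSup hbdd ⟨n, rfl⟩
  simp only at hN h1 h2
  omega


def leaves (T : Set (List Bool)) : Set (List Bool) := {σ | σ ∈ T ∧ ∀ b, σ ++ [b] ∉ T}

lemma leaves_finite {T : Set (List Bool)} (hT : IsBinTree T) {c : ℕ}
    (hc : ∀ F : Finset (List Bool), ↑F ⊆ T → PrefixFreeB ↑F → F.card ≤ c) :
    (leaves T).Finite := by
  by_contra h
  obtain ⟨F, hFsub, hcard⟩ := Set.Infinite.exists_subset_card_eq h (c+1)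
  have hle := hc F (fun σ hσ => (hFsub hσ).1) ?_
  · omega
  · intro σ hσ τ hτ hpre
    by_contra hne
    have hlt : σ.length < τ.length := by
      rcases lt_or_eq_of_le hpre.length_le with h | h
      · exact h
      · exact absurd (hpre.eq_of_length h) hne
    obtain ⟨b, hb⟩ := exists_child_prefix hpre hlt
    exact (hFsub hσ).2 b (hT _ _ hb (hFsub hτ).1)

lemma exists_leaf_above {T : Set (List Bool)} (hT : IsBinTree T) {σ : List Bool}
    (hσ : σ ∈ T) (hne : ¬ Extendible T σ) : ∃ ℓ ∈ leaves T, σ <+: ℓ := by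
  obtain ⟨n, hn⟩ := bounded_of_not_ext hT hne
  suffices h : ∀ k τ, τ ∈ T → σ <+: τ → n ≤ τ.length + k → ∃ ℓ ∈ leaves T, τ <+: ℓ by
    exact h n σ hσ List.prefix_rfl (by omega)
  intro k
  induction k with
  | zero => intro τ hτ hpre hlen; exact absurd (hn τ hτ hpre) (by omega)
  | succ k ih =>
    intro τ hτ hpre hlen
    by_cases hleaf : ∀ b, τ ++ [b] ∉ T
    · exact ⟨τ, ⟨hτ, hleaf⟩, List.prefix_rfl⟩
    · push_neg at hleaf
      obtain ⟨b, hb⟩ := hleaf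
      obtain ⟨ℓ, hℓ, hpre'⟩ := ih (τ ++ [b]) hb
        (hpre.trans (List.prefix_append _ _)) (by simp; omega)
      exact ⟨ℓ, hℓ, (List.prefix_append _ _).trans hpre'⟩

lemma exists_goodbase {T : Set (List Bool)} (hT : IsBinTree T)
    (hinf : ∀ n : ℕ, ∃ σ ∈ T, σ.length = n) {c : ℕ}
    (hc : ∀ F : Finset (List Bool), ↑F ⊆ T → PrefixFreeB ↑F → F.card ≤ c) :
    ∃ σ0 ∈ T, ∀ τ, τ ∈ T → σ0 <+: τ → ∃! b : Bool, τ ++ [b] ∈ T := by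
  classical
  obtain ⟨B, hB⟩ : ∃ B, ∀ ℓ ∈ leaves T, ℓ.length ≤ B := by
    obtain ⟨B, hB⟩ := ((leaves_finite hT hc).image List.length).bddAbove
    exact ⟨B, fun ℓ hℓ => hB ⟨ℓ, hℓ, rfl⟩⟩
  obtain ⟨N', hN'⟩ := exists_const_level hT hc
  set N := max N' (B+1) with hN
  obtain ⟨σ0, hσ0⟩ := extLevel_nonempty hT hinf N
  have hextall : ∀ ρ ∈ T, B < ρ.length → Extendible T ρ := by
    intro ρ hρ hlen
    by_contra hne
    obtain ⟨ℓ, hℓ, hpre⟩ := exists_leaf_above hT hρ hne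
    have h1 := hB ℓ hℓ
    have h2 := hpre.length_le
    omega
  refine ⟨σ0, hσ0.1.1, fun τ hτ hpre => ?_⟩
  have hτlen : N ≤ τ.length := hσ0.2 ▸ hpre.length_le
  have hτext : Extendible T τ := hextall τ hτ (by omega)
  obtain ⟨b, hb⟩ := exists_ext_child hT hτext
  refine ⟨b, hb.1, fun b' hb' => ?_⟩
  by_contra hbb
  have hboth : ∀ bb : Bool, Extendible T (τ ++ [bb]) := by
    intro bb
    rcases eq_or_ne bb b with rfl | hne
    · exact hb
    · have hbbeq : bb = b' := by cases bb <;> cases b <;> cases b' <;> simp_all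
      subst hbbeq
      exact hextall _ hb' (by simp; omega)
  -- counting: extLevel at level τ.length and τ.length + 1
  set n := τ.length with hnn
  choose g hg using fun (σ : List Bool) (h : σ ∈ extLevel T n) => exists_ext_child hT h.1
  set φ : List Bool → List Bool := fun σ => if h : σ ∈ extLevel T n then σ ++ [g σ h] else σ
    with hφ
  have hτmem : τ ∈ extLevel T n := ⟨hτext, rfl⟩
  have hφmem : ∀ σ ∈ extLevel T n, φ σ ∈ extLevel T (n+1) := by
    intro σ hσ
    rw [hφ]; simp only [dif_pos hσ]
    exact ⟨hg σ hσ, by simp [hσ.2]⟩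
  have hφinj : Set.InjOn φ (extLevel T n) := by
    intro σ hσ ρ hρ heq
    rw [hφ] at heq; simp only [dif_pos hσ, dif_pos hρ] at heq
    exact (List.append_inj heq (by rw [hσ.2, hρ.2])).1
  set β := g τ hτmem with hβ
  have hother : τ ++ [!β] ∈ extLevel T (n+1) := ⟨hboth _, by simp [hnn]⟩
  have hnotmem : τ ++ [!β] ∉ φ '' (extLevel T n) := by
    rintro ⟨σ, hσ, hσeq⟩
    rw [hφ] at hσeq; simp only [dif_pos hσ] at hσeq
    obtain ⟨h1, h2⟩ := List.append_inj hσeq (by rw [hσ.2, hτmem.2])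
    subst h1
    simp [hβ] at h2
  have hins : insert (τ ++ [!β]) (φ '' extLevel T n) ⊆ extLevel T (n+1) := by
    intro x hx
    rcases Set.mem_insert_iff.mp hx with rfl | ⟨σ, hσ, rfl⟩
    · exact hother
    · exact hφmem σ hσ
  have hcard1 : (insert (τ ++ [!β]) (φ '' extLevel T n)).ncard
      = (extLevel T n).ncard + 1 := by
    rw [Set.ncard_insert_of_notMem hnotmem ((extLevel_finite T n).image φ),
      Set.ncard_image_of_injOn hφinj]
  have hcard2 : (insert (τ ++ [!β]) (φ '' extLevel T n)).ncard ≤ (extLevel T (n+1)).ncard :=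
    Set.ncard_le_ncard hins (extLevel_finite T (n+1))
  have e1 := hN' n (by omega)
  have e2 := hN' (n+1) (by omega)
  omega


lemma unique_ext {T : Set (List Bool)} (hT : IsBinTree T) {σ0 : List Bool} (hσ0 : σ0 ∈ T)
    (hgood : ∀ τ, τ ∈ T → σ0 <+: τ → ∃! b : Bool, τ ++ [b] ∈ T) (n : ℕ) :
    ∃! τ, τ ∈ T ∧ σ0 <+: τ ∧ τ.length = σ0.length + n := by
  induction n with
  | zero =>
    refine ⟨σ0, ⟨hσ0, List.prefix_rfl, by omega⟩, ?_⟩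
    rintro ρ ⟨hρT, hρpre, hρlen⟩
    exact (hρpre.eq_of_length (by omega)).symm
  | succ n ih =>
    obtain ⟨τ, ⟨hτT, hτpre, hτlen⟩, huniq⟩ := ih
    obtain ⟨b, hbT, hbuniq⟩ := hgood τ hτT hτpre
    refine ⟨τ ++ [b], ⟨hbT, hτpre.trans (List.prefix_append _ _), by simp; omega⟩, ?_⟩
    rintro ρ ⟨hρT, hρpre, hρlen⟩
    have h1 : ρ.take (σ0.length + n) = τ := by
      refine huniq _ ⟨hT _ _ (List.take_prefix _ _) hρT,
        List.prefix_take_iff.mpr ⟨hρpre, by omega⟩, by rw [List.length_take]; omega⟩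
    have h2 : τ <+: ρ := h1 ▸ List.take_prefix _ _
    obtain ⟨r, hr⟩ := h2
    have hrlen : r.length = 1 := by
      have := congrArg List.length hr
      simp at this
      omega
    obtain ⟨b', rfl⟩ := List.length_eq_one_iff.mp hrlen
    rw [← hr, hbuniq b' (show τ ++ [b'] ∈ T by rw [hr]; exact hρT)]


open Nat.Partrec (Code)
open Nat.Partrec.Code

lemma computable_selector {T : Set (List Bool)} (hce : REPred (· ∈ T))
    (σ0 : List Bool) (h : ℕ → List Bool)
    (hspec : ∀ n, (h n) ∈ T ∧ σ0 <+: h n ∧ (h n).length = σ0.length + n)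
    (huniq : ∀ n τ, τ ∈ T → σ0 <+: τ → τ.length = σ0.length + n → τ = h n) :
    Computable h := by
  classical
  have hr : Partrec fun k : ℕ =>
      (Part.ofOption (Encodable.decode (α := List Bool) k)).bind
        fun τ => (Part.assert (τ ∈ T) fun _ => Part.some ()).map fun _ => (0:ℕ) := by
    exact (Computable.ofOption Computable.decode).bind
      ((hce.comp Computable.snd).map ((Computable.const 0).to₂))
  obtain ⟨cd, hcd⟩ := Nat.Partrec.Code.exists_code.mp (Partrec.nat_iff.mp hr)
  have hmemiff : ∀ τ : List Bool,
      τ ∈ T ↔ ∃ s, (evaln s cd (Encodable.encode τ)).isSome := by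
    intro τ
    have h0 : cd.eval (Encodable.encode τ)
        = (Part.assert (τ ∈ T) fun _ => Part.some ()).map fun _ => (0:ℕ) := by
      rw [hcd]; simp [Encodable.encodek]
    constructor
    · intro hτ
      have hm : (0:ℕ) ∈ cd.eval (Encodable.encode τ) := by
        rw [h0]
        simp [Part.mem_map_iff, Part.mem_assert_iff, hτ]
      obtain ⟨s, hs⟩ := evaln_complete.mp hm
      exact ⟨s, Option.isSome_iff_exists.mpr ⟨0, hs⟩⟩
    · rintro ⟨s, hs⟩
      obtain ⟨x, hx⟩ := Option.isSome_iff_exists.mp hs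
      have hm : x ∈ cd.eval (Encodable.encode τ) := evaln_sound hx
      rw [h0] at hm
      simp [Part.mem_map_iff, Part.mem_assert_iff] at hm
      exact hm.1
  set F : ℕ → ℕ → Option (List Bool) := fun n k =>
    (Encodable.decode (α := ℕ × List Bool) k).bind fun p =>
      if p.2.length = n ∧ (evaln p.1 cd (Encodable.encode (σ0 ++ p.2))).isSome = true
      then some (σ0 ++ p.2) else none
    with hF
  have hFprim : Primrec₂ F := by
    have hP1 : PrimrecPred fun x : (ℕ × ℕ) × (ℕ × List Bool) => x.2.2.length = x.1.1 :=
      Primrec.eq.comp (Primrec.list_length.comp (Primrec.snd.comp Primrec.snd))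
        (Primrec.fst.comp Primrec.fst)
    have hP2 : PrimrecPred fun x : (ℕ × ℕ) × (ℕ × List Bool) =>
        (evaln x.2.1 cd (Encodable.encode (σ0 ++ x.2.2))).isSome = true :=
      Primrec.eq.comp (Primrec.option_isSome.comp (primrec_evaln.comp
        (Primrec.pair (Primrec.pair (Primrec.fst.comp Primrec.snd) (Primrec.const cd))
          (Primrec.encode.comp (Primrec.list_append.comp (Primrec.const σ0)
            (Primrec.snd.comp Primrec.snd))))))
        (Primrec.const true)
    exact Primrec.option_bind (Primrec.decode.comp Primrec.snd)
      (Primrec.ite (hP1.and hP2)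
        (Primrec.option_some.comp (Primrec.list_append.comp (Primrec.const σ0)
          (Primrec.snd.comp Primrec.snd)))
        (Primrec.const none))
  have hsound : ∀ n k τ, τ ∈ F n k → τ ∈ T ∧ σ0 <+: τ ∧ τ.length = σ0.length + n := by
    intro n k τ hmem
    rw [hF] at hmem
    simp only [Option.mem_def, Option.bind_eq_some_iff] at hmem
    obtain ⟨p, hp1, hp2⟩ := hmem
    split_ifs at hp2 with hcond
    · obtain ⟨hlen, hev⟩ := hcond
      have hτeq : σ0 ++ p.2 = τ := Option.some.inj hp2
      obtain ⟨x, hx⟩ := Option.isSome_iff_exists.mp hev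
      have hmemT : σ0 ++ p.2 ∈ T := (hmemiff _).mpr ⟨p.1, Option.isSome_iff_exists.mpr ⟨x, hx⟩⟩
      refine ⟨hτeq ▸ hmemT, hτeq ▸ List.prefix_append _ _, ?_⟩
      rw [← hτeq]
      simp [hlen]
  have hcomplete : ∀ n, ∃ k, h n ∈ F n k := by
    intro n
    obtain ⟨hmem, hpre, hlen⟩ := hspec n
    obtain ⟨s, hs⟩ := (hmemiff (h n)).mp hmem
    obtain ⟨ρ, hρ⟩ := hpre
    refine ⟨Encodable.encode ((s, ρ) : ℕ × List Bool), ?_⟩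
    rw [hF]
    simp only [Option.mem_def, Encodable.encodek, Option.bind_some]
    rw [if_pos ?_]
    · rw [hρ]
    · constructor
      · have := congrArg List.length hρ
        simp at this
        omega
      · rw [hρ]; exact hs
  have htot : ∀ n, h n ∈ Nat.rfindOpt (F n) := by
    intro n
    obtain ⟨k, hk⟩ := hcomplete n
    have hdom : (Nat.rfindOpt (F n)).Dom := Nat.rfindOpt_dom.mpr ⟨k, h n, hk⟩
    have hget := Part.get_mem hdom
    obtain ⟨k', hk'⟩ := Nat.rfindOpt_spec hget
    obtain ⟨hmem, hpre, hlen⟩ := hsound n k' _ hk'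
    have heq := huniq n _ hmem hpre hlen
    rwa [heq] at hget
  exact Partrec.of_eq_tot (Partrec.rfindOpt hFprim.to_comp) htot

end S9

/-- A c.e. infinite binary tree all of whose prefix-free subsets have at most `c` elements
has a computable path. -/
theorem stmt9 (T : Set (List Bool)) (hT : IsBinTree T) (hce : REPred (· ∈ T))
    (hinf : ∀ n : ℕ, ∃ σ ∈ T, σ.length = n) (c : ℕ)
    (hc : ∀ F : Finset (List Bool), ↑F ⊆ T → PrefixFreeB ↑F → F.card ≤ c) :
    ∃ f : ℕ → Bool, Computable f ∧ IsPath T f := by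
  classical
  obtain ⟨σ0, hσ0T, hgood⟩ := S9.exists_goodbase hT hinf hc
  have huq := S9.unique_ext hT hσ0T hgood
  choose h hP hu using huq
  have hcomp : Computable h :=
    S9.computable_selector hce σ0 h hP (fun n τ ht hp hl => hu n τ ⟨ht, hp, hl⟩)
  refine ⟨fun n => (h (n+1)).getD n false, ?_, ?_⟩
  · exact (Primrec.list_getD false).to_comp.comp (hcomp.comp Computable.succ) Computable.id
  · -- IsPath
    have hchain : ∀ a b : ℕ, a ≤ b → h a <+: h b := by
      intro a b hab
      have hth : ((h b).take (σ0.length + a)) = h a := by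
        refine hu a _ ⟨hT _ _ (List.take_prefix _ _) (hP b).1,
          List.prefix_take_iff.mpr ⟨(hP b).2.1, by omega⟩, ?_⟩
        rw [List.length_take]
        have := (hP b).2.2
        omega
      exact hth ▸ List.take_prefix _ _
    intro n
    have hlen : ∀ m, (h m).length = σ0.length + m := fun m => (hP m).2.2
    have hofn : (List.ofFn fun i : Fin n => (h (i+1)).getD i false) = (h n).take n := by
      apply List.ext_getElem
      · rw [List.length_ofFn, List.length_take]
        have := hlen n
        omega
      · intro i hi1 hi2
        rw [List.length_ofFn] at hi1
        have hilt : i < (h (i+1)).length := by rw [hlen]; omega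
        have hpre : h (i+1) <+: h n := hchain _ _ (by omega)
        rw [List.getElem_ofFn, List.getElem_take]
        rw [← hpre.getElem hilt]
        rw [List.getD_eq_getElem]
    rw [hofn]
    exact hT _ _ (List.take_prefix _ _) (hP n).1
end

section
/- Let (σ_i)_{i∈ℕ} be a computable sequence of binary strings whose range T = {σ_i : i ∈ ℕ} is a binary tree containing strings of every length. Define T̂ to be the set of strings τ over ℕ such that for all i ≤ j < length τ, σ_{τ(i)} has length i and σ_{τ(i)} is a prefix of σ_{τ(j)}. Then T̂ is a computable infinite tree of strings over ℕ, and for every path g of T̂ the function f : ℕ → Bool defined by f(n) = σ_{g(n+1)}(n) is a path of T; moreover, if g is computable then f is computable. -/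
/-- The tree `T̂` of strings over ℕ coding chains of strings from the enumerated tree
`T = {σ i : i ∈ ℕ}`: `τ ∈ T̂` iff for all `i ≤ j <` length of `τ`, `σ (τ i)` has length `i`
and is a prefix of `σ (τ j)`. -/
def hatTree (σ : ℕ → List Bool) : Set (List ℕ) :=
  {τ : List ℕ | ∀ i j : ℕ, i ≤ j → j < τ.length →
    (σ (τ.getD i 0)).length = i ∧ σ (τ.getD i 0) <+: σ (τ.getD j 0)}

/- ### Auxiliary machinery -/

/-- Boolean prefix test on binary strings. -/
private def preB (a b : List Bool) : Bool :=
  decide (((List.range (min a.length b.length)).map fun i => b.getD i false) = a)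

private lemma range_map_eq_take (a b : List Bool) :
    ((List.range (min a.length b.length)).map fun i => b.getD i false) = b.take a.length := by
  apply List.ext_getElem
  · simp
  · intro i h1 h2
    simp only [List.getElem_map, List.getElem_range, List.getElem_take]
    have hib : i < b.length := by
      simp at h1; omega
    rw [List.getD_eq_getElem _ _ hib]

private lemma preB_eq (a b : List Bool) : preB a b = decide (a <+: b) := by
  rw [preB, range_map_eq_take]
  apply Bool.decide_congr
  rw [List.prefix_iff_eq_take]
  exact eq_comm

private theorem preB_primrec : Primrec₂ preB := by
  have h1 : Primrec fun p : List Bool × List Bool =>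
      (List.range (min p.1.length p.2.length)).map fun i => p.2.getD i false :=
    Primrec.list_map
      (Primrec.list_range.comp
        (Primrec.nat_min.comp (Primrec.list_length.comp .fst) (Primrec.list_length.comp .snd)))
      ((Primrec.list_getD false).comp (Primrec.snd.comp Primrec.fst) Primrec.snd)
  exact (Primrec.eq.comp h1 Primrec.fst).decide

/-- Boolean adjacent-chain check at position `k`. -/
private def chk (σ : ℕ → List Bool) (τ : List ℕ) (k : ℕ) : Bool :=
  (decide ((σ (τ.getD k 0)).length = k)) &&
    ((decide (τ.length ≤ k + 1)) || preB (σ (τ.getD k 0)) (σ (τ.getD (k + 1) 0)))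

/-- Boolean membership test for `hatTree`. -/
private def memB (σ : ℕ → List Bool) (τ : List ℕ) : Bool :=
  τ.length.rec true fun y IH => IH && chk σ τ y

private lemma chk_iff (σ : ℕ → List Bool) (τ : List ℕ) (k : ℕ) :
    chk σ τ k = true ↔
      (σ (τ.getD k 0)).length = k ∧
        (k + 1 < τ.length → σ (τ.getD k 0) <+: σ (τ.getD (k + 1) 0)) := by
  simp only [chk, preB_eq, Bool.and_eq_true, Bool.or_eq_true, decide_eq_true_eq]
  constructor
  · rintro ⟨h1, h2 | h2⟩ <;> exact ⟨h1, fun h => by first | omega | exact h2⟩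
  · rintro ⟨h1, h2⟩
    refine ⟨h1, ?_⟩
    by_cases h : k + 1 < τ.length
    · exact Or.inr (h2 h)
    · exact Or.inl (by omega)

private lemma memB_iff (σ : ℕ → List Bool) (τ : List ℕ) :
    memB σ τ = true ↔ ∀ k < τ.length, chk σ τ k = true := by
  show (Nat.rec true (fun y IH => IH && chk σ τ y) τ.length : Bool) = true ↔ _
  induction τ.length with
  | zero => simp
  | succ n ih =>
    simp only [Bool.and_eq_true, ih, Nat.lt_succ_iff_lt_or_eq]
    constructor
    · rintro ⟨h1, h2⟩ k (hk | rfl)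
      · exact h1 k hk
      · exact h2
    · intro h
      exact ⟨fun k hk => h k (Or.inl hk), h n (Or.inr rfl)⟩

private lemma mem_hatTree_iff (σ : ℕ → List Bool) (τ : List ℕ) :
    τ ∈ hatTree σ ↔ memB σ τ = true := by
  rw [memB_iff]
  constructor
  · intro h k hk
    rw [chk_iff]
    exact ⟨(h k k le_rfl hk).1, fun h' => (h k (k + 1) (Nat.le_succ k) h').2⟩
  · intro h i j hij hj
    have hlen : ∀ k < τ.length, (σ (τ.getD k 0)).length = k :=
      fun k hk => ((chk_iff σ τ k).1 (h k hk)).1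
    have hadj : ∀ k, k + 1 < τ.length → σ (τ.getD k 0) <+: σ (τ.getD (k + 1) 0) :=
      fun k hk => ((chk_iff σ τ k).1 (h k (by omega))).2 hk
    refine ⟨hlen i (lt_of_le_of_lt hij hj), ?_⟩
    clear hlen
    induction j with
    | zero =>
      obtain rfl : i = 0 := Nat.le_zero.mp hij
      exact List.prefix_refl _
    | succ j ihj =>
      rcases Nat.le_succ_iff_eq_or_le.mp (by omega : i ≤ j + 1) with rfl | hij'
      · exact List.prefix_refl _
      · exact (ihj hij' (by omega)).trans (hadj j hj)

private lemma chk_computable {σ : ℕ → List Bool} (hσ : Computable σ) :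
    Computable₂ (chk σ) := by
  have hd1 : Computable fun p : List ℕ × ℕ => σ (p.1.getD p.2 0) :=
    hσ.comp ((Primrec.list_getD 0).to_comp.comp Computable.fst Computable.snd)
  have hd2 : Computable fun p : List ℕ × ℕ => σ (p.1.getD (p.2 + 1) 0) :=
    hσ.comp ((Primrec.list_getD 0).to_comp.comp Computable.fst
      (Computable.succ.comp Computable.snd))
  have h1 : Computable fun p : List ℕ × ℕ => decide ((σ (p.1.getD p.2 0)).length = p.2) :=
    (Primrec.eq (α := ℕ)).decide.to_comp.comp (Computable.list_length.comp hd1) Computable.snd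
  have h2 : Computable fun p : List ℕ × ℕ => decide (p.1.length ≤ p.2 + 1) :=
    Primrec.nat_le.decide.to_comp.comp (Computable.list_length.comp Computable.fst)
      (Computable.succ.comp Computable.snd)
  have h3 : Computable fun p : List ℕ × ℕ =>
      preB (σ (p.1.getD p.2 0)) (σ (p.1.getD (p.2 + 1) 0)) :=
    preB_primrec.to_comp.comp hd1 hd2
  exact (Primrec.dom_bool₂ (· && ·)).to_comp.comp h1
    ((Primrec.dom_bool₂ (· || ·)).to_comp.comp h2 h3)

private lemma memB_computable {σ : ℕ → List Bool} (hσ : Computable σ) :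
    Computable (memB σ) :=
  Computable.nat_rec Computable.list_length (Computable.const true)
    ((Primrec.dom_bool₂ (· && ·)).to_comp.comp (Computable.snd.comp Computable.snd)
      ((chk_computable hσ).comp Computable.fst (Computable.fst.comp Computable.snd))).to₂

/-- If `σ` is a computable sequence of binary strings whose range is a binary tree with
strings of every length, then the associated tree `T̂` over ℕ is a computable infinite
tree, every path `g` of `T̂` yields the path `n ↦ σ (g (n+1)) (n)` of the range of `σ`,
and this path is computable whenever `g` is. -/
theorem stmt13 (σ : ℕ → List Bool) (hσ : Computable σ)
    (hT : IsBinTree (Set.range σ)) (hinf : ∀ n : ℕ, ∃ i : ℕ, (σ i).length = n) :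
    IsTreeN (hatTree σ) ∧ ComputablePred (· ∈ hatTree σ) ∧ (hatTree σ).Infinite ∧
    ∀ g : ℕ → ℕ, IsPathN (hatTree σ) g →
      IsPath (Set.range σ) (fun n => (σ (g (n + 1))).getD n false) ∧
      (Computable g → Computable fun n => (σ (g (n + 1))).getD n false) := by
  refine ⟨?_, ?_, ?_, ?_⟩
  · -- tree
    intro τ₁ τ₂ hpre hmem i j hij hj
    have hlen : τ₁.length ≤ τ₂.length := hpre.length_le
    have hget : ∀ k < τ₁.length, τ₁.getD k 0 = τ₂.getD k 0 := by
      intro k hk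
      rw [List.getD_eq_getElem _ _ hk, List.getD_eq_getElem _ _ (lt_of_lt_of_le hk hlen),
        hpre.getElem hk]
    rw [hget i (lt_of_le_of_lt hij hj), hget j hj]
    exact hmem i j hij (lt_of_lt_of_le hj hlen)
  · -- computable
    rw [ComputablePred.computable_iff]
    exact ⟨memB σ, memB_computable hσ, funext fun τ => propext (mem_hatTree_iff σ τ)⟩
  · -- infinite
    have key : ∀ n : ℕ, ∃ τ ∈ hatTree σ, τ.length = n := by
      intro n
      obtain ⟨i, hi⟩ := hinf n
      have htake : ∀ k : Fin n, (σ i).take (k : ℕ) ∈ Set.range σ :=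
        fun k => hT _ _ (List.take_prefix _ _) ⟨i, rfl⟩
      choose c hc using htake
      refine ⟨List.ofFn c, ?_, by simp⟩
      intro a b hab hb
      rw [List.length_ofFn] at hb
      have ha : a < n := lt_of_le_of_lt hab hb
      have hga : (List.ofFn c).getD a 0 = c ⟨a, ha⟩ := by
        rw [List.getD_eq_getElem _ _ (by simpa using ha), List.getElem_ofFn]
      have hgb : (List.ofFn c).getD b 0 = c ⟨b, hb⟩ := by
        rw [List.getD_eq_getElem _ _ (by simpa using hb), List.getElem_ofFn]
      rw [hga, hgb, hc, hc]
      constructor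
      · simp; omega
      · have : ((σ i).take (b : ℕ)).take (a : ℕ) = (σ i).take (a : ℕ) := by
          rw [List.take_take, Nat.min_eq_left hab]
        rw [← this]
        exact List.take_prefix _ _
    choose t ht hlen using key
    refine Set.infinite_of_injective_forall_mem (f := t) ?_ ht
    intro m n hmn
    have := hlen m
    rw [hmn, hlen n] at this
    exact this.symm
  · -- paths
    intro g hg
    have hH : ∀ n, ∀ i j : ℕ, i ≤ j → j < n + 1 →
        (σ (g i)).length = i ∧ σ (g i) <+: σ (g j) := by
      intro n i j hij hj
      have hmem := hg (n + 1)
      have hget : ∀ k (hk : k < n + 1),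
          (List.ofFn fun i : Fin (n + 1) => g i).getD k 0 = g k := by
        intro k hk
        rw [List.getD_eq_getElem _ _ (by simpa using hk), List.getElem_ofFn]
      have := hmem i j hij (by simpa using hj)
      rwa [hget i (lt_of_le_of_lt hij hj), hget j hj] at this
    have hkey : ∀ n, σ (g n) = List.ofFn fun i : Fin n => (σ (g ((i : ℕ) + 1))).getD (i : ℕ) false := by
      intro n
      have hlen : (σ (g n)).length = n := (hH n n n le_rfl (by omega)).1
      apply List.ext_getElem
      · simp [hlen]
      · intro i h1 h2
        rw [List.getElem_ofFn]
        simp only [Fin.val_mk]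
        have hlen' : (σ (g (i + 1))).length = i + 1 := (hH n (i + 1) n (by omega) (by omega)).1
        have hpre : σ (g (i + 1)) <+: σ (g n) := (hH n (i + 1) n (by omega) (by omega)).2
        rw [List.getD_eq_getElem _ _ (by omega), hpre.getElem (by omega)]
    constructor
    · intro n
      exact ⟨g n, hkey n⟩
    · intro hgc
      have : Computable fun n => ((σ (g (n + 1)))[n]?).getD false :=
        Computable.option_getD
          (Computable.list_getElem?.comp (hσ.comp (hgc.comp Computable.succ)) Computable.id)
          (Computable.const false)
      exact this.of_eq fun n => (List.getD_eq_getElem?_getD).symm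
end
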